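/- arXiv:2605.00581 — 10 statements merged into one kernel-verified Lean document; each statement's English description precedes it below -/
import Mathlib

section
/- Let H be a real Hilbert space, A : H → H a bounded self-adjoint operator with ⟨u, A u⟩ > 0 for all u ≠ 0, g ∈ H, and f* ∈ H with A f* = −g. Let F ⊆ H be closed under scalar multiplication (f ∈ F implies a·f ∈ F for all real a), and let f^w ∈ F minimize Q(f) := ⟨f, g⟩ + (1/2)⟨f, A f⟩ over F. Assume f* ≠ 0 and f^w ≠ 0, and define the A-induced cosine angle Θ := ⟨f*, f^w⟩_A / (‖f*‖_A ‖f^w‖_A). Then: (1) ‖f* − f^w‖_A² = (1 − Θ²) ‖f*‖_A²; (2) ‖f^w‖_A = Θ ‖f*‖_A; (3) ‖f^w‖_A² = −⟨g, f^w⟩. -/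
open scoped RealInnerProductSpace

/-- Properties of the `A`-induced cosine angle `Θ` between the exact Newton
direction `f*` (with `A f* = -g`) and a minimizer `f^w` of the quadratic model
`Q(f) = ⟨f,g⟩ + ½⟨f,Af⟩` over a family `Fam` closed under scalar multiplication:
`‖f* − f^w‖_A² = (1 − Θ²)‖f*‖_A²`, `‖f^w‖_A = Θ‖f*‖_A`, and `‖f^w‖_A² = −⟨g, f^w⟩`. -/
theorem stmt1 {H : Type*} [NormedAddCommGroup H] [InnerProductSpace ℝ H] [CompleteSpace H]
    (A : H →L[ℝ] H)
    (hsa : ∀ u v : H, ⟪A u, v⟫ = ⟪u, A v⟫)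
    (hpos : ∀ u : H, u ≠ 0 → 0 < ⟪u, A u⟫)
    (g fstar : H) (hfstar : A fstar = -g)
    (Fam : Set H) (hscale : ∀ f ∈ Fam, ∀ a : ℝ, a • f ∈ Fam)
    (fw : H) (hmem : fw ∈ Fam)
    (hmin : ∀ f ∈ Fam,
      ⟪fw, g⟫ + (1 / 2) * ⟪fw, A fw⟫ ≤ ⟪f, g⟫ + (1 / 2) * ⟪f, A f⟫)
    (hfstar0 : fstar ≠ 0) (hfw0 : fw ≠ 0) :
    let nA : H → ℝ := fun u => Real.sqrt ⟪u, A u⟫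
    let Θ : ℝ := ⟪fstar, A fw⟫ / (nA fstar * nA fw)
    nA (fstar - fw) ^ 2 = (1 - Θ ^ 2) * nA fstar ^ 2 ∧
    nA fw = Θ * nA fstar ∧
    nA fw ^ 2 = -⟪g, fw⟫ := by
  intro nA Θ
  set c : ℝ := ⟪fw, g⟫ with hc
  set d : ℝ := ⟪fw, A fw⟫ with hd
  have hdpos : 0 < d := hpos fw hfw0
  -- optimality over scalar multiples gives c = -d
  have hkey : c = -d := by
    have h := hmin ((-c / d) • fw) (hscale fw hmem (-c / d))
    have e1 : ⟪(-c / d) • fw, g⟫ = (-c / d) * c := by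
      simp [real_inner_smul_left, hc]
    have e2 : ⟪(-c / d) • fw, A ((-c / d) • fw)⟫ = (-c / d) ^ 2 * d := by
      simp [real_inner_smul_left, real_inner_smul_right, hd]
      ring
    rw [e1, e2] at h
    have hrhs : (-c / d * c + 1 / 2 * ((-c / d) ^ 2 * d)) = -c ^ 2 / (2 * d) := by
      field_simp
      ring
    rw [hrhs] at h
    have h' : (c + 1 / 2 * d) * (2 * d) ≤ (-c ^ 2 / (2 * d)) * (2 * d) :=
      mul_le_mul_of_nonneg_right h (by positivity)
    rw [div_mul_cancel₀ _ (by positivity : (2 : ℝ) * d ≠ 0)] at h'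
    nlinarith [sq_nonneg (c + d)]
  have hspos : 0 < ⟪fstar, A fstar⟫ := hpos fstar hfstar0
  have hnfw : nA fw ^ 2 = d := Real.sq_sqrt hdpos.le
  have hnfs : nA fstar ^ 2 = ⟪fstar, A fstar⟫ := Real.sq_sqrt hspos.le
  have hnfwpos : 0 < nA fw := Real.sqrt_pos.mpr hdpos
  have hnfspos : 0 < nA fstar := Real.sqrt_pos.mpr hspos
  -- cross term
  have hcross : ⟪fstar, A fw⟫ = d := by
    rw [← hsa, hfstar, inner_neg_left, real_inner_comm, ← hc, hkey, neg_neg]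
  have hTheta : Θ = nA fw / nA fstar := by
    have : nA fw * nA fw = d := by nlinarith
    show ⟪fstar, A fw⟫ / (nA fstar * nA fw) = nA fw / nA fstar
    rw [hcross, div_eq_div_iff (mul_pos hnfspos hnfwpos).ne' hnfspos.ne', ← this]
    ring
  have h3 : nA fw ^ 2 = -⟪g, fw⟫ := by
    rw [hnfw, real_inner_comm, ← hc, hkey, neg_neg]
  refine ⟨?_, ?_, h3⟩
  · have hexp : ⟪fstar - fw, A (fstar - fw)⟫ = ⟪fstar, A fstar⟫ - d := by
      have h1 : ⟪fw, A fstar⟫ = d := by rw [← hsa]; rw [real_inner_comm]; exact hcross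
      simp only [inner_sub_left, map_sub, inner_sub_right]
      rw [hcross, h1, ← hd]; ring
    have hdiffnn : 0 ≤ ⟪fstar - fw, A (fstar - fw)⟫ := by
      rcases eq_or_ne (fstar - fw) 0 with h | h
      · simp [h]
      · exact (hpos _ h).le
    have : nA (fstar - fw) ^ 2 = ⟪fstar, A fstar⟫ - d := by
      rw [show nA (fstar - fw) ^ 2 = ⟪fstar - fw, A (fstar - fw)⟫ from
        Real.sq_sqrt hdiffnn, hexp]
    rw [this, hTheta, hnfs]
    field_simp
    nlinarith
  · rw [hTheta]
    field_simp
end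

section
/- Let H be a real Hilbert space and L : H → ℝ twice Fréchet differentiable, S-smooth (its gradient is S-Lipschitz) and μ-strongly convex with 0 < μ ≤ S, and let F ⊆ H be closed under scalar multiplication. Fix a learning rate η ∈ (0, 2μ/S). Consider iterates F_{k+1} = F_k + η f^w_{k+1}, where g_k = ∇L(F_k), H_k = ∇²L(F_k), f_{k+1} is the exact Newton direction satisfying H_k f_{k+1} = −g_k, and f^w_{k+1} minimizes Q_k(f) := ⟨f, g_k⟩ + (1/2)⟨f, H_k f⟩ over F. Let Θ ∈ [0,1] be a lower bound on the Hessian-induced cosine angles Θ_k := ⟨f_{k+1}, f^w_{k+1}⟩_{H_k} / (‖f_{k+1}‖_{H_k} ‖f^w_{k+1}‖_{H_k}). Then for every k: L(F_k) − L(F_{k+1}) ≥ η(1 − ηS/(2μ)) Θ² ‖f_{k+1}‖²_{H_k}. Moreover, if L is Hessian-dominated with constant c > 0 (i.e. ‖f_{k+1}‖²_{H_k} ≥ c L(F_k) for all k), then L(F_{k+1}) ≤ (1 − ρ) L(F_k) for all k, where ρ = c Θ² η (1 − ηS/(2μ)). -/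
open scoped RealInnerProductSpace

private lemma descent_lemma_aux {H : Type*} [NormedAddCommGroup H] [InnerProductSpace ℝ H] [CompleteSpace H]
    (L : H → ℝ) (grad : H → H)
    (hgrad : ∀ x, HasGradientAt L (grad x) x)
    (S : ℝ) (hS : 0 ≤ S)
    (hsmooth : ∀ x y : H, ‖grad x - grad y‖ ≤ S * ‖x - y‖)
    (x d : H) : L (x + d) ≤ L x + ⟪grad x, d⟫ + S / 2 * ‖d‖ ^ 2 := by
  set g : ℝ → ℝ := fun t => L (x + t • d) - t * ⟪grad x, d⟫ - S * t ^ 2 / 2 * ‖d‖ ^ 2 with hgdef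
  have hline : ∀ t : ℝ, HasDerivAt (fun s : ℝ => x + s • d) d t := by
    intro t
    simpa using ((hasDerivAt_id t).smul_const d).const_add x
  have hLd : ∀ t : ℝ, HasDerivAt (fun s : ℝ => L (x + s • d)) ⟪grad (x + t • d), d⟫ t := by
    intro t
    have h1 := ((hgrad (x + t • d)).hasFDerivAt).comp_hasDerivAt t (hline t)
    exact h1.congr_deriv (by simp [InnerProductSpace.toDual_apply_apply])
  have hgd : ∀ t : ℝ, HasDerivAt g
      (⟪grad (x + t • d), d⟫ - ⟪grad x, d⟫ - S * t * ‖d‖ ^ 2) t := by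
    intro t
    have h2 : HasDerivAt (fun s : ℝ => S * s ^ 2 / 2 * ‖d‖ ^ 2)
        (S * t * ‖d‖ ^ 2) t := by
      have := (((hasDerivAt_pow 2 t).const_mul S).div_const 2).mul_const (‖d‖ ^ 2)
      exact this.congr_deriv (by rw [show (2:ℕ) - 1 = 1 from rfl]; push_cast; ring)
    have := ((hLd t).sub ((hasDerivAt_id t).mul_const (⟪grad x, d⟫))).sub h2
    exact this.congr_deriv (by simp)
  have hanti : AntitoneOn g (Set.Icc 0 1) := by
    apply antitoneOn_of_deriv_nonpos (convex_Icc 0 1)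
    · exact (fun t _ => ((hgd t).differentiableAt.continuousAt.continuousWithinAt))
    · intro t ht
      exact (hgd t).differentiableAt.differentiableWithinAt
    · intro t ht
      rw [interior_Icc] at ht
      rw [(hgd t).deriv]
      have h3 : ⟪grad (x + t • d) - grad x, d⟫ ≤ S * t * ‖d‖ ^ 2 := by
        calc ⟪grad (x + t • d) - grad x, d⟫ ≤ ‖grad (x + t • d) - grad x‖ * ‖d‖ :=
              real_inner_le_norm _ _
          _ ≤ (S * ‖(x + t • d) - x‖) * ‖d‖ := by
              have := hsmooth (x + t • d) x
              nlinarith [norm_nonneg d]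
          _ = S * t * ‖d‖ ^ 2 := by
              have : (x + t • d) - x = t • d := by abel
              rw [this, norm_smul, Real.norm_eq_abs, abs_of_pos ht.1]
              ring
      rw [inner_sub_left] at h3
      linarith
  have h01 := hanti (Set.left_mem_Icc.2 zero_le_one) (Set.right_mem_Icc.2 zero_le_one) zero_le_one
  simp only [hgdef] at h01
  norm_num at h01
  linarith

private lemma hess_lower_aux {H : Type*} [NormedAddCommGroup H] [InnerProductSpace ℝ H] [CompleteSpace H]
    (L : H → ℝ) (grad : H → H) (hess : H → H →L[ℝ] H)
    (hhess : ∀ x, HasFDerivAt grad (hess x) x)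
    (μ : ℝ)
    (hstrong : ∀ x y : H, L y ≥ L x + ⟪grad x, y - x⟫ + (μ / 2) * ‖y - x‖ ^ 2)
    (x u : H) : μ * ‖u‖ ^ 2 ≤ ⟪u, hess x u⟫ := by
  have mono : ∀ y z : H, μ * ‖y - z‖ ^ 2 ≤ ⟪grad y - grad z, y - z⟫ := by
    intro y z
    have h1 := hstrong z y
    have h2 := hstrong y z
    have e0 : ‖z - y‖ = ‖y - z‖ := norm_sub_rev _ _
    have e1 : ⟪grad y, z - y⟫ = -⟪grad y, y - z⟫ := by
      rw [← neg_sub y z, inner_neg_right]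
    have e2 : ⟪grad y - grad z, y - z⟫ = ⟪grad y, y - z⟫ - ⟪grad z, y - z⟫ :=
      inner_sub_left _ _ _
    rw [e0] at h2
    rw [e1] at h2
    rw [e2]
    linarith
  set φ : ℝ → ℝ := fun t => ⟪u, grad (x + t • u)⟫ with hφdef
  have hψ : HasDerivAt φ ⟪u, hess x u⟫ 0 := by
    have hline : HasDerivAt (fun s : ℝ => x + s • u) u 0 := by
      simpa using ((hasDerivAt_id (0:ℝ)).smul_const u).const_add x
    have hx : HasFDerivAt grad (hess x) (x + (0:ℝ) • u) := by simpa using hhess x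
    have h0 : HasDerivAt (fun s : ℝ => grad (x + s • u)) (hess x u) 0 :=
      hx.comp_hasDerivAt 0 hline
    have h1 := (innerSL ℝ u).hasFDerivAt.comp_hasDerivAt 0 h0
    exact h1.congr_deriv (by simp [innerSL_apply_apply])
  have hslope := hasDerivAt_iff_tendsto_slope.mp hψ
  have htend : Filter.Tendsto (slope φ 0) (nhdsWithin 0 (Set.Ioi 0)) (nhds ⟪u, hess x u⟫) :=
    hslope.mono_left (nhdsWithin_mono _ (fun t ht => ne_of_gt ht))
  have hle : ∀ᶠ t in nhdsWithin (0:ℝ) (Set.Ioi 0), μ * ‖u‖ ^ 2 ≤ slope φ 0 t := by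
    filter_upwards [self_mem_nhdsWithin] with t ht
    have ht0 : (0:ℝ) < t := ht
    have hm := mono (x + t • u) x
    have e : (x + t • u) - x = t • u := by abel
    rw [e] at hm
    have e2 : ⟪grad (x + t • u) - grad x, t • u⟫
        = t * (φ t - φ 0) := by
      rw [real_inner_smul_right, inner_sub_left]
      simp only [hφdef, zero_smul, add_zero]
      rw [real_inner_comm (grad (x + t • u)) u, real_inner_comm (grad x) u]
    have e3 : ‖t • u‖ ^ 2 = t ^ 2 * ‖u‖ ^ 2 := by
      rw [norm_smul, Real.norm_eq_abs, abs_of_pos ht0]; ring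
    rw [e2, e3] at hm
    have es : slope φ 0 t = (φ t - φ 0) / t := by rw [slope_def_field, sub_zero]
    rw [es, le_div_iff₀ ht0]
    nlinarith [hm, ht0]
  exact ge_of_tendsto htend hle


private lemma hess_symm_aux {H : Type*} [NormedAddCommGroup H] [InnerProductSpace ℝ H] [CompleteSpace H]
    (L : H → ℝ) (grad : H → H) (hess : H → H →L[ℝ] H)
    (hgrad : ∀ x, HasGradientAt L (grad x) x)
    (hhess : ∀ x, HasFDerivAt grad (hess x) x)
    (x u v : H) : ⟪u, hess x v⟫ = ⟪v, hess x u⟫ := by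
  have hf : ∀ y, HasFDerivAt L (innerSL ℝ (grad y)) y := by
    intro y
    have h := (hgrad y).hasFDerivAt
    have e : (InnerProductSpace.toDual ℝ H (grad y) : H →L[ℝ] ℝ) = innerSL ℝ (grad y) := by
      ext w
      simp [InnerProductSpace.toDual_apply_apply]
    rwa [e] at h
  have hx : HasFDerivAt (fun y => innerSL ℝ (grad y)) ((innerSL ℝ).comp (hess x)) x :=
    (innerSL ℝ).hasFDerivAt.comp x (hhess x)
  have h := second_derivative_symmetric hf hx u v
  simp only [ContinuousLinearMap.comp_apply, innerSL_apply_apply] at h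
  have c1 := real_inner_comm u (hess x v : H)
  have c2 := real_inner_comm v (hess x u : H)
  linarith

set_option maxHeartbeats 1000000 in
/-- **Global Rate I.** For an `S`-smooth, `μ`-strongly convex twice Fréchet
differentiable loss `L` on a real Hilbert space, vanilla restricted Newton descent with
learning rate `η ∈ (0, 2μ/S)`, weak learners from a scalable family, and Hessian-induced
cosine angle bounded below by `Θ`, guarantees
`L(F_k) − L(F_{k+1}) ≥ η(1 − ηS/(2μ)) Θ² ‖f_{k+1}‖²_{H_k}`; if moreover `L` is
Hessian-dominated with constant `c > 0`, then `L(F_{k+1}) ≤ (1 − ρ) L(F_k)` with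
`ρ = c Θ² η (1 − ηS/(2μ))`. -/
theorem stmt2 {H : Type*} [NormedAddCommGroup H] [InnerProductSpace ℝ H] [CompleteSpace H]
    (L : H → ℝ) (grad : H → H) (hess : H → H →L[ℝ] H)
    (hgrad : ∀ x, HasGradientAt L (grad x) x)
    (hhess : ∀ x, HasFDerivAt grad (hess x) x)
    (S μ : ℝ) (hμ : 0 < μ) (hμS : μ ≤ S)
    (hsmooth : ∀ x y : H, ‖grad x - grad y‖ ≤ S * ‖x - y‖)
    (hstrong : ∀ x y : H, L y ≥ L x + ⟪grad x, y - x⟫ + (μ / 2) * ‖y - x‖ ^ 2)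
    (Fam : Set H) (hscale : ∀ f ∈ Fam, ∀ a : ℝ, a • f ∈ Fam)
    (η : ℝ) (hη0 : 0 < η) (hη1 : η < 2 * μ / S)
    (F f fw : ℕ → H)
    (hnewton : ∀ k, hess (F k) (f k) = -(grad (F k)))
    (hmem : ∀ k, fw k ∈ Fam)
    (hmin : ∀ k, ∀ q ∈ Fam,
      ⟪fw k, grad (F k)⟫ + (1 / 2) * ⟪fw k, hess (F k) (fw k)⟫
        ≤ ⟪q, grad (F k)⟫ + (1 / 2) * ⟪q, hess (F k) q⟫)
    (hiter : ∀ k, F (k + 1) = F k + η • fw k)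
    (Θ : ℝ) (hΘ0 : 0 ≤ Θ) (hΘ1 : Θ ≤ 1)
    (hΘ : ∀ k, Θ ≤ ⟪f k, hess (F k) (fw k)⟫ /
      (Real.sqrt ⟪f k, hess (F k) (f k)⟫ * Real.sqrt ⟪fw k, hess (F k) (fw k)⟫)) :
    (∀ k, L (F k) - L (F (k + 1))
        ≥ η * (1 - η * S / (2 * μ)) * Θ ^ 2 * ⟪f k, hess (F k) (f k)⟫) ∧
    (∀ c : ℝ, 0 < c → (∀ k, ⟪f k, hess (F k) (f k)⟫ ≥ c * L (F k)) →
      ∀ k, L (F (k + 1)) ≤ (1 - c * Θ ^ 2 * η * (1 - η * S / (2 * μ))) * L (F k)) := by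
  have descent_aux : ∀ x d : H, L (x + d) ≤ L x + ⟪grad x, d⟫ + S / 2 * ‖d‖ ^ 2 :=
    descent_lemma_aux L grad hgrad S (le_trans hμ.le hμS) hsmooth
  have hess_lower : ∀ x u : H, μ * ‖u‖ ^ 2 ≤ ⟪u, hess x u⟫ :=
    hess_lower_aux L grad hess hhess μ hstrong
  have hess_symm : ∀ x u v : H, ⟪u, hess x v⟫ = ⟪v, hess x u⟫ :=
    hess_symm_aux L grad hess hgrad hhess
  have hS : 0 < S := lt_of_lt_of_le hμ hμS
  have hηS : η * S < 2 * μ := by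
    rw [lt_div_iff₀ hS] at hη1; linarith
  have key : ∀ k, L (F k) - L (F (k + 1))
      ≥ η * (1 - η * S / (2 * μ)) * Θ ^ 2 * ⟪f k, hess (F k) (f k)⟫ := by
    intro k
    set a : ℝ := ⟪f k, hess (F k) (f k)⟫ with hadef
    set b : ℝ := ⟪fw k, hess (F k) (fw k)⟫ with hbdef
    have ha0 : μ * ‖f k‖ ^ 2 ≤ a := hess_lower _ _
    have hb0 : μ * ‖fw k‖ ^ 2 ≤ b := hess_lower _ _
    have ha0' : (0:ℝ) ≤ a := le_trans (by positivity) ha0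
    have hb0' : (0:ℝ) ≤ b := le_trans (by positivity) hb0
    -- optimality over the ray: ⟪fw k, grad (F k)⟫ = -b
    have hopt : ⟪fw k, grad (F k)⟫ = -b := by
      set c2 : ℝ := ⟪fw k, grad (F k)⟫ with hc2def
      have hq : ∀ t : ℝ, c2 + (1/2) * b ≤ t * c2 + (1/2) * (t^2 * b) := by
        intro t
        have h := hmin k (t • fw k) (hscale _ (hmem k) t)
        have e1 : ⟪t • fw k, grad (F k)⟫ = t * c2 := real_inner_smul_left _ _ _
        have e2 : ⟪t • fw k, hess (F k) (t • fw k)⟫ = t ^ 2 * b := by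
          rw [map_smul, real_inner_smul_left, real_inner_smul_right, ← hbdef]; ring
        rw [e1, e2] at h
        exact h
      have hb1 : (0:ℝ) < b + 1 := by linarith
      set s : ℝ := -(c2 + b) / (b + 1) with hsdef
      have hs : s * (b + 1) = -(c2 + b) := by
        rw [hsdef]; field_simp
      have h1 := hq (1 + s)
      have h3 : 0 ≤ s * (c2 + b) + s ^ 2 * b / 2 := by nlinarith [h1]
      have h4 : 0 ≤ (s * (c2 + b) + s ^ 2 * b / 2) * ((b + 1) * (b + 1)) :=
        mul_nonneg h3 (by positivity)
      have h5 : (s * (c2 + b) + s ^ 2 * b / 2) * ((b + 1) * (b + 1))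
          = (s * (b + 1)) * ((c2 + b) * (b + 1))
            + (s * (b + 1)) * (s * (b + 1)) * (b / 2) := by ring
      rw [h5, hs] at h4
      have hkey : (c2 + b) ^ 2 * (b + 2) ≤ 0 := by linarith [h4]
      have h6 : (c2 + b) ^ 2 = 0 := le_antisymm
        (by nlinarith [hkey, mul_nonneg (sq_nonneg (c2 + b)) hb0', sq_nonneg (c2 + b)])
        (sq_nonneg _)
      have h7 : c2 + b = 0 := by
        exact pow_eq_zero_iff (n := 2) (by norm_num) |>.mp h6
      linarith
    -- cosine bound: Θ^2 * a ≤ b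
    have hfg : ⟪f k, hess (F k) (fw k)⟫ = b := by
      rw [hess_symm (F k) (f k) (fw k), hnewton k]
      rw [inner_neg_right]
      rw [hopt]
      ring
    have hΘb : Θ ^ 2 * a ≤ b := by
      have hΘk := hΘ k
      rw [hfg, ← hadef, ← hbdef] at hΘk
      rcases eq_or_lt_of_le hb0' with hb | hb
      · have : Θ ≤ 0 := by
          rw [← hb] at hΘk
          simpa using hΘk
        have hΘz : Θ = 0 := le_antisymm this hΘ0
        rw [hΘz, ← hb]; simp
      · rcases eq_or_lt_of_le ha0' with ha | ha
        · have : Real.sqrt a = 0 := by rw [← ha]; simp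
          rw [this] at hΘk
          simp at hΘk
          have hΘz : Θ = 0 := le_antisymm hΘk hΘ0
          rw [hΘz, ← ha]; simpa using hb0'
        · have hsa : (0:ℝ) < Real.sqrt a := Real.sqrt_pos.2 ha
          have hsb : (0:ℝ) < Real.sqrt b := Real.sqrt_pos.2 hb
          have hbb : Real.sqrt b * Real.sqrt b = b := Real.mul_self_sqrt hb0'
          have haa : Real.sqrt a * Real.sqrt a = a := Real.mul_self_sqrt ha0'
          have h1 : Θ * Real.sqrt a ≤ Real.sqrt b := by
            rw [le_div_iff₀ (by positivity)] at hΘk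
            nlinarith [hΘk, hbb, hsa, hsb]
          nlinarith [mul_self_le_mul_self (by positivity : (0:ℝ) ≤ Θ * Real.sqrt a) h1,
            hbb, haa]
    -- descent lemma
    have hdesc := descent_aux (F k) (η • fw k)
    rw [← hiter k] at hdesc
    have e3 : ⟪grad (F k), η • fw k⟫ = η * (-b) := by
      rw [real_inner_smul_right, real_inner_comm, hopt]
    have e4 : ‖η • fw k‖ ^ 2 = η ^ 2 * ‖fw k‖ ^ 2 := by
      rw [norm_smul, Real.norm_eq_abs, abs_of_pos hη0]; ring
    rw [e3, e4] at hdesc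
    -- conclude
    have ecoef : η * (1 - η * S / (2 * μ)) * Θ ^ 2 * a
        = (2 * μ * η - η ^ 2 * S) * (Θ ^ 2 * a) / (2 * μ) := by
      field_simp
    rw [ge_iff_le, ecoef, div_le_iff₀ (by positivity : (0:ℝ) < 2 * μ)]
    have hpos2 : (0:ℝ) < 2 * μ * η - η ^ 2 * S := by
      have := mul_pos hη0 (show (0:ℝ) < 2 * μ - η * S by linarith)
      nlinarith [this]
    have Hb : (2 * μ * η - η ^ 2 * S) * (Θ ^ 2 * a) ≤ (2 * μ * η - η ^ 2 * S) * b :=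
      mul_le_mul_of_nonneg_left hΘb hpos2.le
    have Hc : μ * (S * η ^ 2 * ‖fw k‖ ^ 2) ≤ S * η ^ 2 * b := by
      have h9 : (0:ℝ) ≤ S * η ^ 2 := by positivity
      nlinarith [mul_le_mul_of_nonneg_left hb0 h9]
    have Hd : (η * b - S / 2 * (η ^ 2 * ‖fw k‖ ^ 2)) * (2 * μ)
        ≤ (L (F k) - L (F (k + 1))) * (2 * μ) := by
      have h10 : L (F k) - L (F (k + 1)) ≥ η * b - S / 2 * (η ^ 2 * ‖fw k‖ ^ 2) := by
        linarith [hdesc]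
      exact mul_le_mul_of_nonneg_right h10 (by positivity)
    nlinarith [Hb, Hc, Hd]
  refine ⟨key, ?_⟩
  intro c hc hdom k
  have h1 := key k
  have h2 := hdom k
  have hP : (0:ℝ) < 1 - η * S / (2 * μ) := by
    rw [sub_pos, div_lt_one (by positivity)]; linarith
  have hcoef : (0:ℝ) ≤ η * (1 - η * S / (2 * μ)) * Θ ^ 2 := by positivity
  nlinarith [mul_le_mul_of_nonneg_left h2 hcoef]
end

section
/- Let H be a real Hilbert space and L : H → ℝ twice Fréchet differentiable, μ-strongly convex (μ > 0) with 2M-Lipschitz Fréchet Hessian (M > 0). Let F ⊆ H be closed under scalar multiplication, fix η ∈ (0, 1], C ≥ 1 and γ ∈ (0, 1], and consider gradient-regularized Newton iterates: g_k = ∇L(F_k), H_k = ∇²L(F_k), λ_k = C √(M‖g_k‖), f^w_{k+1} minimizes Q_k^reg(f) := ⟨f, g_k⟩ + (1/2)⟨f, H_k f⟩ + (λ_k/2)‖f‖² over F, F_{k+1} = F_k + η f^w_{k+1}, and the implied weak gradients g^w_k := −(H_k + λ_k I) f^w_{k+1} satisfy ‖g^w_k − g_k‖² ≤ (1 − γ²)‖g_k‖²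 for all k. Suppose there exists k_0 ≥ 0 with ‖g_{k_0}‖ ≤ (μ²/(4C²M)) · ((1 − √(1 − γ²))/(1 + √(1 − γ²)))². Then for all k ≥ k_0, ‖g_{k+1}‖ ≤ ((3 + ρ)/4) ‖g_k‖, where ρ = 1 − η(1 − √(1 − γ²)) < 1; in particular the gradient norms converge to zero at a linear rate. -/
open scoped RealInnerProductSpace


lemma aux_taylor {H : Type*} [NormedAddCommGroup H] [InnerProductSpace ℝ H] [CompleteSpace H]
    (grad : H → H) (hess : H → H →L[ℝ] H)
    (hhess : ∀ x, HasFDerivAt grad (hess x) x)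
    (M : ℝ) (hM : 0 ≤ M)
    (hlip : ∀ x y : H, ‖hess x - hess y‖ ≤ 2 * M * ‖x - y‖)
    (x y : H) :
    ‖grad y - grad x - hess x (y - x)‖ ≤ M * ‖y - x‖ ^ 2 := by
  set v := y - x with hv
  have hcont : Continuous hess := by
    have : LipschitzWith (Real.toNNReal (2 * M)) hess := by
      apply LipschitzWith.of_dist_le_mul
      intro a b
      rw [dist_eq_norm, dist_eq_norm]
      calc ‖hess a - hess b‖ ≤ 2 * M * ‖a - b‖ := hlip a b
        _ ≤ Real.toNNReal (2 * M) * ‖a - b‖ := by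
            gcongr; exact Real.le_coe_toNNReal _
    exact this.continuous
  set ψ : ℝ → H := fun t => grad (x + t • v) - t • hess x v with hψ
  have hderiv : ∀ t : ℝ, HasDerivAt ψ (hess (x + t • v) v - hess x v) t := by
    intro t
    have hline : HasDerivAt (fun t : ℝ => x + t • v) v t := by
      simpa using ((hasDerivAt_id t).smul_const v).const_add x
    have h1 : HasDerivAt (fun t : ℝ => grad (x + t • v)) (hess (x + t • v) v) t := by
      exact (hhess (x + t • v)).comp_hasDerivAt t hline
    have h2 := h1.sub ((hasDerivAt_id t).smul_const (hess x v))
    rw [one_smul] at h2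
    exact h2
  have hcont' : Continuous fun t : ℝ => hess (x + t • v) v - hess x v := by
    have : Continuous fun t : ℝ => x + t • v :=
      continuous_const.add (continuous_id.smul continuous_const)
    exact ((hcont.comp this).clm_apply continuous_const).sub continuous_const
  have hint : IntervalIntegrable (fun t : ℝ => hess (x + t • v) v - hess x v)
      MeasureTheory.volume 0 1 := hcont'.intervalIntegrable 0 1
  have heq : ∫ t in (0:ℝ)..1, (hess (x + t • v) v - hess x v) = ψ 1 - ψ 0 :=
    intervalIntegral.integral_eq_sub_of_hasDerivAt (fun t _ => hderiv t) hint
  have hψ1 : ψ 1 - ψ 0 = grad y - grad x - hess x v := by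
    simp [hψ, hv]
    abel
  have hbound : ‖∫ t in (0:ℝ)..1, (hess (x + t • v) v - hess x v)‖
      ≤ ∫ t in (0:ℝ)..1, 2 * M * ‖v‖ ^ 2 * t := by
    refine (intervalIntegral.norm_integral_le_integral_norm (by norm_num)).trans ?_
    apply intervalIntegral.integral_mono_on (by norm_num) hint.norm
    · exact (Continuous.intervalIntegrable (by continuity) 0 1)
    · intro t ht
      have ht0 : 0 ≤ t := ht.1
      calc ‖hess (x + t • v) v - hess x v‖
            = ‖(hess (x + t • v) - hess x) v‖ := by simp
        _ ≤ ‖hess (x + t • v) - hess x‖ * ‖v‖ :=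
            (hess (x + t • v) - hess x).le_opNorm v
        _ ≤ 2 * M * ‖x + t • v - x‖ * ‖v‖ := by gcongr; exact hlip _ _
        _ = 2 * M * ‖v‖ ^ 2 * t := by
            rw [add_sub_cancel_left, norm_smul, Real.norm_eq_abs, abs_of_nonneg ht0]; ring
  have hval : ∫ t in (0:ℝ)..1, 2 * M * ‖v‖ ^ 2 * t = M * ‖v‖ ^ 2 := by
    rw [intervalIntegral.integral_const_mul, integral_id]
    ring_nf
  calc ‖grad y - grad x - hess x v‖ = ‖∫ t in (0:ℝ)..1, (hess (x + t • v) v - hess x v)‖ := by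
        rw [heq, hψ1]
    _ ≤ M * ‖v‖ ^ 2 := by rw [hval] at hbound; exact hbound


lemma aux_hess {H : Type*} [NormedAddCommGroup H] [InnerProductSpace ℝ H] [CompleteSpace H]
    (L : H → ℝ) (grad : H → H) (hess : H → H →L[ℝ] H)
    (μ : ℝ)
    (hstrong : ∀ x y : H, L y ≥ L x + ⟪grad x, y - x⟫ + (μ / 2) * ‖y - x‖ ^ 2)
    (M : ℝ) (hM : 0 < M)
    (htaylor : ∀ x y : H, ‖grad y - grad x - hess x (y - x)‖ ≤ M * ‖y - x‖ ^ 2)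
    (x v : H) :
    μ * ‖v‖ ^ 2 ≤ ⟪v, hess x v⟫ := by
  have hmono : ∀ y : H, μ * ‖y - x‖ ^ 2 ≤ ⟪grad y - grad x, y - x⟫ := by
    intro y
    have h1 := hstrong x y
    have h2 := hstrong y x
    have hn : ‖x - y‖ = ‖y - x‖ := norm_sub_rev x y
    have e1 : ⟪grad y, x - y⟫ = -⟪grad y, y - x⟫ := by
      rw [show x - y = -(y - x) by abel, inner_neg_right]
    rw [inner_sub_left]
    rw [e1, hn] at h2
    linarith
  have key : ∀ ε > (0:ℝ), μ * ‖v‖ ^ 2 ≤ ⟪v, hess x v⟫ + ε := by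
    intro ε hε
    set t : ℝ := ε / (M * ‖v‖ ^ 3 + 1) with ht
    have hden : 0 < M * ‖v‖ ^ 3 + 1 := by positivity
    have ht0 : 0 < t := div_pos hε hden
    set y := x + t • v with hy
    have hyx : y - x = t • v := by simp [hy]
    have hr := htaylor x y
    rw [hyx] at hr
    set r := grad y - grad x - hess x (t • v) with hrdef
    have hnorm_r : ‖r‖ ≤ M * t ^ 2 * ‖v‖ ^ 2 := by
      have : ‖t • v‖ ^ 2 = t ^ 2 * ‖v‖ ^ 2 := by
        rw [norm_smul, Real.norm_eq_abs, mul_pow, sq_abs]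
      calc ‖r‖ ≤ M * ‖t • v‖ ^ 2 := hr
        _ = M * t ^ 2 * ‖v‖ ^ 2 := by rw [this]; ring
    have hm := hmono y
    rw [hyx] at hm
    have hsplit : ⟪grad y - grad x, t • v⟫ = t ^ 2 * ⟪hess x v, v⟫ + t * ⟪r, v⟫ := by
      have : grad y - grad x = t • hess x v + r := by
        rw [hrdef]; rw [map_smul]; abel
      rw [this, inner_add_left]
      simp only [real_inner_smul_left, real_inner_smul_right]
      ring
    have hcs : ⟪r, v⟫ ≤ M * t ^ 2 * ‖v‖ ^ 3 := by
      calc ⟪r, v⟫ ≤ ‖r‖ * ‖v‖ := real_inner_le_norm r v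
        _ ≤ M * t ^ 2 * ‖v‖ ^ 2 * ‖v‖ := by
            apply mul_le_mul_of_nonneg_right hnorm_r (norm_nonneg v)
        _ = M * t ^ 2 * ‖v‖ ^ 3 := by ring
    have hnsm : ‖t • v‖ ^ 2 = t ^ 2 * ‖v‖ ^ 2 := by
      rw [norm_smul, Real.norm_eq_abs, mul_pow, sq_abs]
    rw [hnsm, hsplit] at hm
    -- hm : μ * (t^2 * ‖v‖^2) ≤ t^2 * ⟪hess x v, v⟫ + t * ⟪r,v⟫
    have ht2 : 0 < t ^ 2 := by positivity
    have hdivided : μ * ‖v‖ ^ 2 ≤ ⟪hess x v, v⟫ + M * t * ‖v‖ ^ 3 := by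
      nlinarith [hm, hcs, ht0, mul_le_mul_of_nonneg_left hcs (le_of_lt ht0)]
    have htail : M * t * ‖v‖ ^ 3 ≤ ε := by
      rw [ht]
      rw [div_eq_mul_inv]
      rw [mul_comm M, mul_assoc]
      have h1 : M * ‖v‖ ^ 3 ≤ M * ‖v‖ ^ 3 + 1 := by linarith
      calc ε * (M * ‖v‖ ^ 3 + 1)⁻¹ * (M * ‖v‖ ^ 3)
          ≤ ε * (M * ‖v‖ ^ 3 + 1)⁻¹ * (M * ‖v‖ ^ 3 + 1) := by
            apply mul_le_mul_of_nonneg_left h1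
            positivity
        _ = ε := by field_simp
    rw [real_inner_comm]
    linarith
  exact le_of_forall_pos_le_add key

set_option maxHeartbeats 1000000 in
/-- **Local Rate.** For a `μ`-strongly convex loss with `2M`-Lipschitz Hessian,
gradient-regularized restricted Newton descent with `λ_k = C√(M‖g_k‖)` (`C ≥ 1`),
learning rate `η ∈ (0,1]` and weak gradient edge `γ ∈ (0,1]` contracts the gradient norm
linearly once `‖g_{k₀}‖ ≤ (μ²/(4C²M)) ((1−√(1−γ²))/(1+√(1−γ²)))²`:
`‖g_{k+1}‖ ≤ ((3+ρ)/4)‖g_k‖` for all `k ≥ k₀`, where `ρ = 1 − η(1−√(1−γ²)) < 1`. -/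
theorem stmt7 {H : Type*} [NormedAddCommGroup H] [InnerProductSpace ℝ H] [CompleteSpace H]
    (L : H → ℝ) (grad : H → H) (hess : H → H →L[ℝ] H)
    (hgrad : ∀ x, HasGradientAt L (grad x) x)
    (hhess : ∀ x, HasFDerivAt grad (hess x) x)
    (μ : ℝ) (hμ : 0 < μ)
    (hstrong : ∀ x y : H, L y ≥ L x + ⟪grad x, y - x⟫ + (μ / 2) * ‖y - x‖ ^ 2)
    (M : ℝ) (hM : 0 < M)
    (hlip : ∀ x y : H, ‖hess x - hess y‖ ≤ 2 * M * ‖x - y‖)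
    (Fam : Set H) (hscale : ∀ f ∈ Fam, ∀ a : ℝ, a • f ∈ Fam)
    (η : ℝ) (hη0 : 0 < η) (hη1 : η ≤ 1)
    (C : ℝ) (hC : 1 ≤ C)
    (γ : ℝ) (hγ0 : 0 < γ) (hγ1 : γ ≤ 1)
    (F fw : ℕ → H)
    (lam : ℕ → ℝ) (hlam : ∀ k, lam k = C * Real.sqrt (M * ‖grad (F k)‖))
    (hmem : ∀ k, fw k ∈ Fam)
    (hmin : ∀ k, ∀ q ∈ Fam,
      ⟪fw k, grad (F k)⟫ + (1 / 2) * ⟪fw k, hess (F k) (fw k)⟫ + (lam k / 2) * ‖fw k‖ ^ 2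
        ≤ ⟪q, grad (F k)⟫ + (1 / 2) * ⟪q, hess (F k) q⟫ + (lam k / 2) * ‖q‖ ^ 2)
    (hiter : ∀ k, F (k + 1) = F k + η • fw k)
    (hedge : ∀ k, ‖-(hess (F k) (fw k) + lam k • fw k) - grad (F k)‖ ^ 2
      ≤ (1 - γ ^ 2) * ‖grad (F k)‖ ^ 2)
    (k₀ : ℕ)
    (hk₀ : ‖grad (F k₀)‖ ≤ μ ^ 2 / (4 * C ^ 2 * M) *
      ((1 - Real.sqrt (1 - γ ^ 2)) / (1 + Real.sqrt (1 - γ ^ 2))) ^ 2) :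
    let ρ : ℝ := 1 - η * (1 - Real.sqrt (1 - γ ^ 2))
    ρ < 1 ∧
    (∀ k, k₀ ≤ k → ‖grad (F (k + 1))‖ ≤ (3 + ρ) / 4 * ‖grad (F k)‖) ∧
    (∀ k, k₀ ≤ k → ‖grad (F k)‖ ≤ ((3 + ρ) / 4) ^ (k - k₀) * ‖grad (F k₀)‖) := by
  intro ρ
  have hρdef : ρ = 1 - η * (1 - Real.sqrt (1 - γ ^ 2)) := rfl
  set s := Real.sqrt (1 - γ ^ 2) with hs
  have hγsq : 0 ≤ 1 - γ ^ 2 := by nlinarith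
  have hs0 : 0 ≤ s := Real.sqrt_nonneg _
  have hssq : s ^ 2 = 1 - γ ^ 2 := Real.sq_sqrt hγsq
  have hs1 : s < 1 := by nlinarith
  have hC0 : (0:ℝ) < C := lt_of_lt_of_le one_pos hC
  have h1s : (0:ℝ) < 1 + s := by linarith
  have htaylor := aux_taylor grad hess hhess M hM.le hlip
  have hhlb : ∀ x v : H, μ * ‖v‖ ^ 2 ≤ ⟪v, hess x v⟫ :=
    aux_hess L grad hess μ hstrong M hM htaylor
  have hρ1 : ρ < 1 := by rw [hρdef]; nlinarith
  have hρ0 : 0 ≤ ρ := by rw [hρdef]; nlinarith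
  set B : ℝ := μ ^ 2 / (4 * C ^ 2 * M) * ((1 - s) / (1 + s)) ^ 2 with hBdef
  -- the one-step contraction
  have hstep : ∀ k, ‖grad (F k)‖ ≤ B →
      ‖grad (F (k + 1))‖ ≤ (3 + ρ) / 4 * ‖grad (F k)‖ := by
    intro k hGB
    have hG0 : (0:ℝ) ≤ ‖grad (F k)‖ := norm_nonneg _
    set G := ‖grad (F k)‖ with hGdef
    set gw : H := -(hess (F k) (fw k) + lam k • fw k) with hgw
    have h1 : ‖gw - grad (F k)‖ ≤ s * G := by
      have h := hedge k
      have hrhs : (1 - γ ^ 2) * ‖grad (F k)‖ ^ 2 = (s * G) ^ 2 := by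
        rw [mul_pow, hssq]
      rw [hrhs] at h
      have h' := Real.sqrt_le_sqrt h
      rwa [Real.sqrt_sq (norm_nonneg _), Real.sqrt_sq (mul_nonneg hs0 hG0)] at h'
    have h2 : ‖gw‖ ≤ (1 + s) * G := by
      calc ‖gw‖ = ‖(gw - grad (F k)) + grad (F k)‖ := by rw [sub_add_cancel]
        _ ≤ ‖gw - grad (F k)‖ + ‖grad (F k)‖ := norm_add_le _ _
        _ ≤ s * G + G := by rw [hGdef] at h1 ⊢; linarith
        _ = (1 + s) * G := by ring
    have hlam0 : 0 ≤ lam k := by rw [hlam]; positivity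
    have h3 : μ * ‖fw k‖ ≤ ‖gw‖ := by
      have hq := hhlb (F k) (fw k)
      have hneg : -gw = hess (F k) (fw k) + lam k • fw k := by rw [hgw, neg_neg]
      have hidentity : ⟪fw k, -gw⟫
          = ⟪fw k, hess (F k) (fw k)⟫ + lam k * ‖fw k‖ ^ 2 := by
        rw [hneg, inner_add_right, real_inner_smul_right, real_inner_self_eq_norm_sq]
      have hcs : ⟪fw k, -gw⟫ ≤ ‖fw k‖ * ‖gw‖ := by
        calc ⟪fw k, -gw⟫ ≤ ‖fw k‖ * ‖-gw‖ := real_inner_le_norm _ _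
          _ = ‖fw k‖ * ‖gw‖ := by rw [norm_neg]
      have hw2 : μ * ‖fw k‖ ^ 2 ≤ ‖fw k‖ * ‖gw‖ := by
        nlinarith [mul_nonneg hlam0 (sq_nonneg ‖fw k‖)]
      rcases eq_or_lt_of_le (norm_nonneg (fw k)) with h0 | h0
      · rw [← h0, mul_zero]; exact norm_nonneg gw
      · nlinarith [hw2, h0]
    have hw : μ * ‖fw k‖ ≤ (1 + s) * G := h3.trans h2
    -- Taylor step
    have hT : ‖grad (F (k + 1)) - grad (F k) - η • (hess (F k) (fw k))‖
        ≤ M * η ^ 2 * ‖fw k‖ ^ 2 := by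
      have ht := htaylor (F k) (F (k + 1))
      have hd : F (k + 1) - F k = η • fw k := by rw [hiter k]; abel
      rw [hd, map_smul] at ht
      calc ‖grad (F (k + 1)) - grad (F k) - η • (hess (F k) (fw k))‖
          ≤ M * ‖η • fw k‖ ^ 2 := ht
        _ = M * η ^ 2 * ‖fw k‖ ^ 2 := by
            rw [norm_smul, Real.norm_eq_abs, abs_of_nonneg hη0.le, mul_pow]; ring
    have hdecomp : grad (F (k + 1)) = (grad (F k) - η • gw) + (-(η * lam k)) • fw k
        + (grad (F (k + 1)) - grad (F k) - η • (hess (F k) (fw k))) := by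
      rw [hgw]; module
    have hnorm1 : ‖grad (F k) - η • gw‖ ≤ ρ * G := by
      have hre : grad (F k) - η • gw = (1 - η) • grad (F k) + η • (grad (F k) - gw) := by
        module
      rw [hre]
      calc ‖(1 - η) • grad (F k) + η • (grad (F k) - gw)‖
          ≤ ‖(1 - η) • grad (F k)‖ + ‖η • (grad (F k) - gw)‖ := norm_add_le _ _
        _ = (1 - η) * G + η * ‖grad (F k) - gw‖ := by
            rw [norm_smul, norm_smul, Real.norm_eq_abs, Real.norm_eq_abs,
              abs_of_nonneg (by linarith : (0:ℝ) ≤ 1 - η), abs_of_nonneg hη0.le]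
        _ ≤ (1 - η) * G + η * (s * G) := by
            have : ‖grad (F k) - gw‖ = ‖gw - grad (F k)‖ := norm_sub_rev _ _
            rw [this]; nlinarith [h1, hη0.le]
        _ = ρ * G := by rw [hρdef]; ring
    have hmain : ‖grad (F (k + 1))‖ ≤ ρ * G + η * lam k * ‖fw k‖ + M * η ^ 2 * ‖fw k‖ ^ 2 := by
      calc ‖grad (F (k + 1))‖
          = ‖(grad (F k) - η • gw) + (-(η * lam k)) • fw k
            + (grad (F (k + 1)) - grad (F k) - η • (hess (F k) (fw k)))‖ := by
            rw [← hdecomp]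
        _ ≤ ‖grad (F k) - η • gw‖ + ‖(-(η * lam k)) • fw k‖
            + ‖grad (F (k + 1)) - grad (F k) - η • (hess (F k) (fw k))‖ := norm_add₃_le
        _ ≤ ρ * G + η * lam k * ‖fw k‖ + M * η ^ 2 * ‖fw k‖ ^ 2 := by
            have hB2 : ‖(-(η * lam k)) • fw k‖ = η * lam k * ‖fw k‖ := by
              rw [norm_smul, Real.norm_eq_abs, abs_neg,
                abs_of_nonneg (mul_nonneg hη0.le hlam0)]
            rw [hB2]
            exact add_le_add (add_le_add hnorm1 le_rfl) hT
    -- arithmetic bounds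
    have hMB : (μ * (1 - s) / (2 * C * (1 + s))) ^ 2 = M * B := by
      rw [hBdef]; field_simp; ring
    have hsqrt : Real.sqrt (M * G) ≤ μ * (1 - s) / (2 * C * (1 + s)) := by
      have hx : M * G ≤ (μ * (1 - s) / (2 * C * (1 + s))) ^ 2 := by
        rw [hMB]; exact mul_le_mul_of_nonneg_left hGB hM.le
      have hnn : 0 ≤ μ * (1 - s) / (2 * C * (1 + s)) := by
        apply div_nonneg (mul_nonneg hμ.le (by linarith)) (by positivity)
      have h' := Real.sqrt_le_sqrt hx
      rwa [Real.sqrt_sq hnn] at h'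
    have hlamle : lam k ≤ μ * (1 - s) / (2 * (1 + s)) := by
      rw [hlam]
      calc C * Real.sqrt (M * ‖grad (F k)‖)
          ≤ C * (μ * (1 - s) / (2 * C * (1 + s))) :=
            mul_le_mul_of_nonneg_left hsqrt hC0.le
        _ = μ * (1 - s) / (2 * (1 + s)) := by field_simp
    have hterm2 : η * lam k * ‖fw k‖ ≤ η * ((1 - s) * G / 2) := by
      have hA0 : 0 ≤ μ * (1 - s) / (2 * (1 + s)) := by
        apply div_nonneg (mul_nonneg hμ.le (by linarith)) (by positivity)
      have hmm : lam k * (μ * ‖fw k‖) ≤ (μ * (1 - s) / (2 * (1 + s))) * ((1 + s) * G) :=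
        mul_le_mul hlamle hw (mul_nonneg hμ.le (norm_nonneg _)) hA0
      have heq : (μ * (1 - s) / (2 * (1 + s))) * ((1 + s) * G) = μ * ((1 - s) * G / 2) := by
        field_simp
      rw [heq] at hmm
      have hlw : lam k * ‖fw k‖ ≤ (1 - s) * G / 2 := by
        have := hmm
        nlinarith [hμ]
      nlinarith [hη0.le, hlw]
    have hGB' : 4 * C ^ 2 * M * (1 + s) ^ 2 * G ≤ μ ^ 2 * (1 - s) ^ 2 := by
      have hpos : (0:ℝ) ≤ 4 * C ^ 2 * M * (1 + s) ^ 2 := by positivity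
      calc 4 * C ^ 2 * M * (1 + s) ^ 2 * G
          ≤ 4 * C ^ 2 * M * (1 + s) ^ 2 * B := mul_le_mul_of_nonneg_left hGB hpos
        _ = μ ^ 2 * (1 - s) ^ 2 := by rw [hBdef]; field_simp
    have hterm3 : M * η ^ 2 * ‖fw k‖ ^ 2 ≤ η * ((1 - s) * G / 4) := by
      have hwsq : (μ * ‖fw k‖) * (μ * ‖fw k‖) ≤ ((1 + s) * G) * ((1 + s) * G) :=
        mul_le_mul hw hw (mul_nonneg hμ.le (norm_nonneg _))
          (mul_nonneg (by linarith) hG0)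
      have hGBG := mul_le_mul_of_nonneg_right hGB' hG0
      have h5 : 4 * C ^ 2 * M * η ^ 2 * ((μ * ‖fw k‖) * (μ * ‖fw k‖))
          ≤ 4 * C ^ 2 * M * η ^ 2 * (((1 + s) * G) * ((1 + s) * G)) :=
        mul_le_mul_of_nonneg_left hwsq (by positivity)
      have h6 : η ^ 2 * (4 * C ^ 2 * M * (1 + s) ^ 2 * G * G)
          ≤ η ^ 2 * (μ ^ 2 * (1 - s) ^ 2 * G) :=
        mul_le_mul_of_nonneg_left hGBG (sq_nonneg η)
      have hη2 : η ^ 2 ≤ η := by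
        rw [sq]; exact mul_le_of_le_one_left hη0.le hη1
      have hsm : (1 - s) ^ 2 ≤ 1 - s := by
        rw [sq]; exact mul_le_of_le_one_left (by linarith) (by linarith)
      have h7 : η ^ 2 * ((1 - s) ^ 2) ≤ η * (1 - s) :=
        mul_le_mul hη2 hsm (sq_nonneg _) hη0.le
      have h8 : η ^ 2 * (μ ^ 2 * (1 - s) ^ 2 * G) ≤ C ^ 2 * μ ^ 2 * (η * (1 - s) * G) := by
        have h7' := mul_le_mul_of_nonneg_right h7 (mul_nonneg (sq_nonneg μ) hG0)
        have hC2 : 1 ≤ C ^ 2 := by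
          calc (1:ℝ) = 1 * 1 := by ring
            _ ≤ C * C := mul_le_mul hC hC zero_le_one hC0.le
            _ = C ^ 2 := (sq C).symm
        have hpos : 0 ≤ η * (1 - s) * (μ ^ 2 * G) :=
          mul_nonneg (mul_nonneg hη0.le (by linarith)) (mul_nonneg (sq_nonneg μ) hG0)
        have h9 : η * (1 - s) * (μ ^ 2 * G) ≤ C ^ 2 * (η * (1 - s) * (μ ^ 2 * G)) :=
          le_mul_of_one_le_left hpos hC2
        calc η ^ 2 * (μ ^ 2 * (1 - s) ^ 2 * G)
            = η ^ 2 * (1 - s) ^ 2 * (μ ^ 2 * G) := by ring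
          _ ≤ η * (1 - s) * (μ ^ 2 * G) := h7'
          _ ≤ C ^ 2 * (η * (1 - s) * (μ ^ 2 * G)) := h9
          _ = C ^ 2 * μ ^ 2 * (η * (1 - s) * G) := by ring
      have hchain : 4 * C ^ 2 * μ ^ 2 * (M * η ^ 2 * ‖fw k‖ ^ 2)
          ≤ 4 * C ^ 2 * μ ^ 2 * (η * ((1 - s) * G / 4)) := by
        calc 4 * C ^ 2 * μ ^ 2 * (M * η ^ 2 * ‖fw k‖ ^ 2)
            = 4 * C ^ 2 * M * η ^ 2 * ((μ * ‖fw k‖) * (μ * ‖fw k‖)) := by ring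
          _ ≤ 4 * C ^ 2 * M * η ^ 2 * (((1 + s) * G) * ((1 + s) * G)) := h5
          _ = η ^ 2 * (4 * C ^ 2 * M * (1 + s) ^ 2 * G * G) := by ring
          _ ≤ η ^ 2 * (μ ^ 2 * (1 - s) ^ 2 * G) := h6
          _ ≤ C ^ 2 * μ ^ 2 * (η * (1 - s) * G) := h8
          _ = 4 * C ^ 2 * μ ^ 2 * (η * ((1 - s) * G / 4)) := by ring
      exact le_of_mul_le_mul_left hchain (by positivity)
    have hsum : ρ * G + η * ((1 - s) * G / 2) + η * ((1 - s) * G / 4)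
        = (3 + ρ) / 4 * G := by
      rw [hρdef]; ring
    calc ‖grad (F (k + 1))‖
        ≤ ρ * G + η * lam k * ‖fw k‖ + M * η ^ 2 * ‖fw k‖ ^ 2 := hmain
      _ ≤ ρ * G + η * ((1 - s) * G / 2) + η * ((1 - s) * G / 4) := by
          linarith [hterm2, hterm3]
      _ = (3 + ρ) / 4 * G := hsum
  have hτ0 : (0:ℝ) ≤ (3 + ρ) / 4 := by linarith
  have hτ1 : (3 + ρ) / 4 ≤ 1 := by linarith
  have hinv : ∀ k, k₀ ≤ k → ‖grad (F k)‖ ≤ B := by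
    intro k hk
    induction k, hk using Nat.le_induction with
    | base => exact hk₀
    | succ n hn ih =>
      calc ‖grad (F (n + 1))‖ ≤ (3 + ρ) / 4 * ‖grad (F n)‖ := hstep n ih
        _ ≤ 1 * ‖grad (F n)‖ := mul_le_mul_of_nonneg_right hτ1 (norm_nonneg _)
        _ = ‖grad (F n)‖ := one_mul _
        _ ≤ B := ih
  refine ⟨hρ1, fun k hk => hstep k (hinv k hk), ?_⟩
  intro k hk
  induction k, hk using Nat.le_induction with
  | base => simp
  | succ n hn ih =>
    have h1 := hstep n (hinv n hn)
    have hnk : n + 1 - k₀ = (n - k₀) + 1 := by omega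
    rw [hnk, pow_succ]
    calc ‖grad (F (n + 1))‖ ≤ (3 + ρ) / 4 * ‖grad (F n)‖ := h1
      _ ≤ (3 + ρ) / 4 * (((3 + ρ) / 4) ^ (n - k₀) * ‖grad (F k₀)‖) :=
          mul_le_mul_of_nonneg_left ih hτ0
      _ = ((3 + ρ) / 4) ^ (n - k₀) * ((3 + ρ) / 4) * ‖grad (F k₀)‖ := by ring
end

section
/- Let c > 0 and let (α_k)_{k≥0} be a nonincreasing sequence of nonnegative real numbers satisfying 0 ≤ α_{k+1} ≤ α_k − c α_k^{3/2} for all k ≥ 0. Then for all k ≥ 0, α_k ≤ 1/(1/√α_0 + (c/2)k)² ≤ 4/(c²(k + 2)²). -/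
/-- If `(α_k)` is a nonincreasing sequence of nonnegative reals with
`α_{k+1} ≤ α_k − c α_k^{3/2}` (where `α^{3/2} = α·√α`) for some `c > 0`, then
`α_k ≤ 1/(1/√α₀ + (c/2)k)² ≤ 4/(c²(k+2)²)` for all `k`. -/
theorem stmt9 (c : ℝ) (hc : 0 < c) (α : ℕ → ℝ)
    (hnonneg : ∀ k, 0 ≤ α k)
    (hmono : ∀ k, α (k + 1) ≤ α k)
    (hrec : ∀ k, α (k + 1) ≤ α k - c * (α k * Real.sqrt (α k))) :
    ∀ k : ℕ,
      α k ≤ 1 / (1 / Real.sqrt (α 0) + (c / 2) * (k : ℝ)) ^ 2 ∧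
      α k ≤ 4 / (c ^ 2 * ((k : ℝ) + 2) ^ 2) := by
  rcases eq_or_lt_of_le (hnonneg 0) with h0 | h0
  · -- α 0 = 0, hence α k = 0 for all k
    have hz : ∀ k, α k = 0 := by
      intro k
      induction k with
      | zero => exact h0.symm
      | succ n ih =>
        exact le_antisymm (by rw [← ih]; exact hmono n) (hnonneg _)
    intro k
    refine ⟨?_, ?_⟩
    · rw [hz k]; exact div_nonneg zero_le_one (sq_nonneg _)
    · rw [hz k]; positivity
  · -- α 0 > 0
    have s0 : 0 < Real.sqrt (α 0) := Real.sqrt_pos.2 h0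
    have hsq0 : Real.sqrt (α 0) ^ 2 = α 0 := Real.sq_sqrt (hnonneg 0)
    have hc1 : c ≤ 1 / Real.sqrt (α 0) := by
      rw [le_div_iff₀ s0]
      have h1 := hrec 0
      have h2 := hnonneg 1
      nlinarith [mul_pos s0 s0, s0]
    have main : ∀ k : ℕ, 0 < α k →
        1 / Real.sqrt (α 0) + (c / 2) * (k : ℝ) ≤ 1 / Real.sqrt (α k) := by
      intro k
      induction k with
      | zero => intro _; simp
      | succ n ih =>
        intro hpos
        have hposn : 0 < α n := lt_of_lt_of_le hpos (hmono n)
        have IH := ih hposn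
        have ha : 0 < Real.sqrt (α n) := Real.sqrt_pos.2 hposn
        have hb : 0 < Real.sqrt (α (n + 1)) := Real.sqrt_pos.2 hpos
        have ha2 : Real.sqrt (α n) ^ 2 = α n := Real.sq_sqrt (hnonneg n)
        have hb2 : Real.sqrt (α (n + 1)) ^ 2 = α (n + 1) := Real.sq_sqrt (hnonneg _)
        have hba : Real.sqrt (α (n + 1)) ≤ Real.sqrt (α n) :=
          Real.sqrt_le_sqrt (hmono n)
        set a := Real.sqrt (α n) with ha_def
        set b := Real.sqrt (α (n + 1)) with hb_def
        have hr : α (n + 1) ≤ a ^ 2 - c * (a ^ 2 * a) := by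
          have h := hrec n
          rw [← ha_def, ← ha2] at h
          exact h
        have h2 : 0 ≤ a - (c / 2) * a ^ 2 := by
          nlinarith [hpos, ha, mul_pos ha ha]
        have h1 : α (n + 1) ≤ (a - (c / 2) * a ^ 2) ^ 2 := by
          nlinarith [sq_nonneg (c * a ^ 2)]
        have key : b ≤ a - (c / 2) * a ^ 2 := by
          have := Real.sqrt_le_sqrt h1
          rwa [Real.sqrt_sq h2] at this
        have key2 : (1 / a) * b ≤ 1 - (c / 2) * a := by
          have h := mul_le_mul_of_nonneg_left key
            (le_of_lt (by positivity : (0:ℝ) < 1 / a))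
          have heq : (1 / a) * (a - (c / 2) * a ^ 2) = 1 - (c / 2) * a := by
            field_simp
          linarith [h.trans_eq heq]
        rw [le_div_iff₀ hb]
        push_cast
        nlinarith [mul_le_mul_of_nonneg_right IH hb.le, key2, hba, hc.le]
    intro k
    have hX : 0 < 1 / Real.sqrt (α 0) + (c / 2) * (k : ℝ) := by positivity
    have hfirst : α k ≤ 1 / (1 / Real.sqrt (α 0) + (c / 2) * (k : ℝ)) ^ 2 := by
      rcases eq_or_lt_of_le (hnonneg k) with hk | hk
      · rw [← hk]; exact div_nonneg zero_le_one (sq_nonneg _)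
      · have h := main k hk
        have hs : 0 < Real.sqrt (α k) := Real.sqrt_pos.2 hk
        have hsq : Real.sqrt (α k) ^ 2 = α k := Real.sq_sqrt (hnonneg k)
        rw [le_div_iff₀ (by positivity)]
        have h2 : (1 / Real.sqrt (α 0) + (c / 2) * (k : ℝ)) ^ 2 ≤ (1 / Real.sqrt (α k)) ^ 2 :=
          pow_le_pow_left₀ hX.le h 2
        have hinv : (1 / Real.sqrt (α k)) ^ 2 * α k = 1 := by
          rw [div_pow, one_pow, hsq]; field_simp
        nlinarith [mul_le_mul_of_nonneg_right h2 (hnonneg k)]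
    have hX2 : (c / 2) * ((k : ℝ) + 2) ≤ 1 / Real.sqrt (α 0) + (c / 2) * (k : ℝ) := by
      nlinarith [hc1]
    have hsecond : 1 / (1 / Real.sqrt (α 0) + (c / 2) * (k : ℝ)) ^ 2 ≤
        4 / (c ^ 2 * ((k : ℝ) + 2) ^ 2) := by
      have hpos2 : (0:ℝ) < (c / 2) * ((k : ℝ) + 2) := by positivity
      have hsq2 : ((c / 2) * ((k : ℝ) + 2)) ^ 2 ≤
          (1 / Real.sqrt (α 0) + (c / 2) * (k : ℝ)) ^ 2 :=
        pow_le_pow_left₀ hpos2.le hX2 2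
      have := one_div_le_one_div_of_le (by positivity) hsq2
      calc 1 / (1 / Real.sqrt (α 0) + (c / 2) * (k : ℝ)) ^ 2
          ≤ 1 / ((c / 2) * ((k : ℝ) + 2)) ^ 2 := this
        _ = 4 / (c ^ 2 * ((k : ℝ) + 2) ^ 2) := by
            rw [mul_pow]; field_simp; ring
    exact ⟨hfirst, hfirst.trans hsecond⟩
end

section
/- Let L(x) = √(1 + x²), fix a learning rate η > 0, and consider the damped Newton iteration x_{k+1} = x_k − η L'(x_k)/L''(x_k), which equals x_{k+1} = x_k (1 − η(1 + x_k²)). Define X(η) := √(max{0, 3/η − 1}). Then every initialization with |x_0| ≥ X(η) satisfies |x_{k+1}| ≥ 2|x_k| for all k ≥ 0; in particular, if additionally x_0 ≠ 0, then |x_k| → ∞. -/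
private lemma sqrt_deriv1 (t : ℝ) :
    HasDerivAt (fun t : ℝ => Real.sqrt (1 + t ^ 2)) (t / Real.sqrt (1 + t ^ 2)) t := by
  have hpos : (0:ℝ) < 1 + t ^ 2 := by positivity
  have h : HasDerivAt (fun t : ℝ => 1 + t ^ 2) (2 * t) t := by
    simpa using (hasDerivAt_pow 2 t).const_add 1
  have h2 := h.sqrt (ne_of_gt hpos)
  have he : 2 * t / (2 * Real.sqrt (1 + t ^ 2)) = t / Real.sqrt (1 + t ^ 2) :=
    mul_div_mul_left _ _ two_ne_zero
  simpa [he] using h2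

private lemma sqrt_deriv2 (t : ℝ) :
    HasDerivAt (fun t : ℝ => t / Real.sqrt (1 + t ^ 2))
      (1 / ((1 + t ^ 2) * Real.sqrt (1 + t ^ 2))) t := by
  have hpos : (0:ℝ) < 1 + t ^ 2 := by positivity
  have hs : Real.sqrt (1 + t ^ 2) ≠ 0 := ne_of_gt (Real.sqrt_pos.mpr hpos)
  have h := (hasDerivAt_id t).div (sqrt_deriv1 t) hs
  refine h.congr_deriv ?_
  simp only [id]
  have hsq : Real.sqrt (1 + t ^ 2) ^ 2 = 1 + t ^ 2 := Real.sq_sqrt hpos.le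
  field_simp
  nlinarith [hsq, Real.sqrt_pos.mpr hpos]

/-- For `L(x) = √(1+x²)` and learning rate `η > 0`, the damped Newton
iteration `x_{k+1} = x_k − η L'(x_k)/L''(x_k)` equals `x_{k+1} = x_k(1 − η(1 + x_k²))`, and
every initialization with `|x₀| ≥ X(η) := √(max{0, 3/η − 1})` satisfies `|x_{k+1}| ≥ 2|x_k|`
for all `k`; in particular, if additionally `x₀ ≠ 0`, then `|x_k| → ∞`. -/
theorem stmt11 (L : ℝ → ℝ) (hLdef : ∀ t, L t = Real.sqrt (1 + t ^ 2))
    (η : ℝ) (hη : 0 < η)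
    (x : ℕ → ℝ)
    (hrec : ∀ k, x (k + 1) = x k - η * (deriv L (x k) / iteratedDeriv 2 L (x k)))
    (hX : Real.sqrt (max 0 (3 / η - 1)) ≤ |x 0|) :
    (∀ k, x (k + 1) = x k * (1 - η * (1 + (x k) ^ 2))) ∧
    (∀ k, 2 * |x k| ≤ |x (k + 1)|) ∧
    (x 0 ≠ 0 → Filter.Tendsto (fun k => |x k|) Filter.atTop Filter.atTop) := by
  have hL : L = fun t => Real.sqrt (1 + t ^ 2) := funext hLdef
  subst hL
  have hd1 : deriv (fun t : ℝ => Real.sqrt (1 + t ^ 2)) =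
      fun t => t / Real.sqrt (1 + t ^ 2) := funext fun t => (sqrt_deriv1 t).deriv
  have hd2 : ∀ t : ℝ, iteratedDeriv 2 (fun t : ℝ => Real.sqrt (1 + t ^ 2)) t =
      1 / ((1 + t ^ 2) * Real.sqrt (1 + t ^ 2)) := by
    intro t
    rw [iteratedDeriv_succ, iteratedDeriv_one, hd1]
    exact (sqrt_deriv2 t).deriv
  have hratio : ∀ t : ℝ, deriv (fun t : ℝ => Real.sqrt (1 + t ^ 2)) t /
      iteratedDeriv 2 (fun t : ℝ => Real.sqrt (1 + t ^ 2)) t = t * (1 + t ^ 2) := by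
    intro t
    have hpos : (0:ℝ) < 1 + t ^ 2 := by positivity
    have hs : Real.sqrt (1 + t ^ 2) ≠ 0 := ne_of_gt (Real.sqrt_pos.mpr hpos)
    rw [hd1, hd2]
    field_simp
  have hform : ∀ k, x (k + 1) = x k * (1 - η * (1 + (x k) ^ 2)) := by
    intro k
    rw [hrec k, hratio (x k)]; ring
  -- key estimate
  have hkey : ∀ y : ℝ, Real.sqrt (max 0 (3 / η - 1)) ≤ |y| → 3 ≤ η * (1 + y ^ 2) := by
    intro y hy
    have h1 : max 0 (3 / η - 1) ≤ y ^ 2 := by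
      have := pow_le_pow_left₀ (Real.sqrt_nonneg _) hy 2
      rwa [Real.sq_sqrt (le_max_left _ _), sq_abs] at this
    have h2 : 3 / η - 1 ≤ y ^ 2 := le_trans (le_max_right _ _) h1
    have h3 : 3 / η ≤ 1 + y ^ 2 := by linarith
    rw [div_le_iff₀ hη] at h3
    linarith
  have hstep : ∀ y : ℝ, Real.sqrt (max 0 (3 / η - 1)) ≤ |y| →
      2 * |y| ≤ |y * (1 - η * (1 + y ^ 2))| := by
    intro y hy
    have h3 := hkey y hy
    have habs : 2 ≤ |1 - η * (1 + y ^ 2)| := by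
      have : -(1 - η * (1 + y ^ 2)) ≤ |1 - η * (1 + y ^ 2)| := neg_le_abs _
      linarith
    rw [abs_mul]
    have := mul_le_mul_of_nonneg_left habs (abs_nonneg y)
    linarith
  have hinv : ∀ k, Real.sqrt (max 0 (3 / η - 1)) ≤ |x k| := by
    intro k
    induction k with
    | zero => exact hX
    | succ n ih =>
      have h := hstep (x n) ih
      rw [← hform n] at h
      have : |x n| ≤ 2 * |x n| := by have := abs_nonneg (x n); linarith
      linarith
  have hgrow : ∀ k, 2 * |x k| ≤ |x (k + 1)| := by
    intro k
    have h := hstep (x k) (hinv k)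
    rwa [← hform k] at h
  refine ⟨hform, hgrow, fun h0 => ?_⟩
  have hgeom : ∀ k, 2 ^ k * |x 0| ≤ |x k| := by
    intro k
    induction k with
    | zero => simp
    | succ n ih =>
      calc 2 ^ (n + 1) * |x 0| = 2 * (2 ^ n * |x 0|) := by ring
        _ ≤ 2 * |x n| := by linarith
        _ ≤ |x (n + 1)| := hgrow n
  have habs0 : 0 < |x 0| := abs_pos.mpr h0
  exact Filter.tendsto_atTop_mono hgeom
    ((tendsto_pow_atTop_atTop_of_one_lt one_lt_two).atTop_mul_const habs0)
end

section
/- Let d : [0, ∞) → [0, ∞) be continuous with d(0) = 0 and d(x) > 0 for all x > 0, and suppose there exist δ > 0 and C_0 < ∞ such that |d(x) − x| ≤ C_0 x² for all x ∈ [0, δ]. For x > 0 define Φ(x) := ∫_1^x ds/d(s), L_+'(x) := a e^{Φ(x)} for a fixed a > 0, L_+(x) := ∫_0^x L_+'(t) dt, and extend evenly by L(x) := L_+(|x|), with L(0) := 0. Let d̃ denote the odd extension d̃(x) := sign(x) d(|x|), d̃(0) := 0. Then: (i) L is even, convex, and C² on ℝ, with L''(x) > 0 for x ≠ 0, L'(x)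 = L_+'(x) and L''(x) = L_+'(x)/d(x) for x > 0; (ii) L'(x)/L''(x) = d̃(x) for all x ≠ 0, so the classical Newton update for L is exactly N(x) = x − d̃(x); (iii) if in addition there exist X_0 > 0 and β > 1 such that d(x) ≥ (1 + β) x for all x ≥ X_0, then every Newton iterate sequence x_{k+1} = x_k − d̃(x_k) with |x_0| ≥ X_0 satisfies |x_{k+1}| ≥ β |x_k| for all k ≥ 0, hence diverges. -/
open MeasureTheory intervalIntegral Set Filter Topology

section Aux

variable (d : ℝ → ℝ) (a : ℝ)

/-- Antiderivative of the correction `1/d s - 1/s`. -/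
noncomputable def cAux (t : ℝ) : ℝ := ∫ s in t..(1:ℝ), (1 / d s - 1 / s)

/-- The factor `M` with `L₊'(t) = t * M t` for `t > 0`. -/
noncomputable def MAux (t : ℝ) : ℝ := a * Real.exp (-(cAux d t))

end Aux

lemma div_div_self'' {P D : ℝ} (hP : P ≠ 0) (hD : D ≠ 0) : P / (P / D) = D := by
  field_simp

set_option maxHeartbeats 2000000

/-- **drift-to-loss generator.** Given a continuous drift `d` on `[0,∞)` with
`d(0)=0`, `d>0` on `(0,∞)` and `|d(x)−x| ≤ C₀x²` near `0`, the loss built via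
`Φ(x) = ∫₁ˣ ds/d(s)`, `L₊'(x) = a e^{Φ(x)}`, `L(x) = ∫₀^{|x|} L₊'(t) dt` is even, convex and
`C²` with `L''>0` off the origin, `L'(x) = L₊'(x)` and `L''(x) = L₊'(x)/d(x)` for `x>0`;
moreover `L'(x)/L''(x) = d̃(x)` (the odd extension of `d`), so the Newton update is
`N(x) = x − d̃(x)`, and if `d(x) ≥ (1+β)x` for `x ≥ X₀` with `β > 1`, any Newton sequence
started with `|x₀| ≥ X₀` satisfies `|x_{k+1}| ≥ β|x_k|` and diverges. -/
theorem stmt12 (d : ℝ → ℝ)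
    (hd_cont : ContinuousOn d (Set.Ici 0))
    (hd0 : d 0 = 0)
    (hd_pos : ∀ x : ℝ, 0 < x → 0 < d x)
    (hd_nonneg : ∀ x : ℝ, 0 ≤ x → 0 ≤ d x)
    (δ C₀ : ℝ) (hδ : 0 < δ)
    (hquad : ∀ x ∈ Set.Icc (0 : ℝ) δ, |d x - x| ≤ C₀ * x ^ 2)
    (a : ℝ) (ha : 0 < a)
    (Φ : ℝ → ℝ) (hΦ : ∀ x, Φ x = ∫ s in (1 : ℝ)..x, 1 / d s)
    (Lp : ℝ → ℝ) (hLp : ∀ x, Lp x = a * Real.exp (Φ x))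
    (L : ℝ → ℝ) (hL : ∀ x, L x = ∫ t in (0 : ℝ)..|x|, Lp t)
    (dt : ℝ → ℝ) (hdt : ∀ x, dt x = Real.sign x * d |x|) :
    ((∀ x, L (-x) = L x) ∧
      ConvexOn ℝ Set.univ L ∧
      ContDiff ℝ 2 L ∧
      (∀ x : ℝ, x ≠ 0 → 0 < iteratedDeriv 2 L x) ∧
      (∀ x : ℝ, 0 < x → deriv L x = Lp x) ∧
      (∀ x : ℝ, 0 < x → iteratedDeriv 2 L x = Lp x / d x)) ∧
    (∀ x : ℝ, x ≠ 0 → deriv L x / iteratedDeriv 2 L x = dt x) ∧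
    (∀ X₀ β : ℝ, 0 < X₀ → 1 < β → (∀ x : ℝ, X₀ ≤ x → (1 + β) * x ≤ d x) →
      ∀ x : ℕ → ℝ, (∀ k, x (k + 1) = x k - dt (x k)) → X₀ ≤ |x 0| →
        (∀ k, β * |x k| ≤ |x (k + 1)|) ∧
        Filter.Tendsto (fun k => |x k|) Filter.atTop Filter.atTop) := by
  classical
  -- notation
  set g : ℝ → ℝ := fun s => 1 / d s - 1 / s with hg_def
  set M : ℝ → ℝ := MAux d a with hM_def
  set c : ℝ → ℝ := cAux d with hc_def
  have hc_eq : ∀ t, c t = ∫ s in t..(1:ℝ), g s := fun t => rfl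
  have hM_eq : ∀ t, M t = a * Real.exp (-(c t)) := fun t => rfl
  -- basic constants
  set C₁ : ℝ := |C₀| + 1 with hC₁_def
  have hC₁_pos : 0 < C₁ := by positivity
  set η : ℝ := min δ (1 / (2 * C₁)) with hη_def
  have hη_pos : 0 < η := lt_min hδ (by positivity)
  have hη_le_δ : η ≤ δ := min_le_left _ _
  have hη_le : η ≤ 1 / (2 * C₁) := min_le_right _ _
  -- quadratic bound with positive constant
  have hquad' : ∀ s : ℝ, 0 ≤ s → s ≤ δ → |d s - s| ≤ C₁ * s ^ 2 := by
    intro s hs0 hsδ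
    refine (hquad s ⟨hs0, hsδ⟩).trans ?_
    have : C₀ ≤ C₁ := by
      rw [hC₁_def]; nlinarith [abs_nonneg C₀, le_abs_self C₀]
    nlinarith [sq_nonneg s]
  -- lower bound for d near 0
  have hd_lb : ∀ s : ℝ, 0 < s → s ≤ η → s / 2 ≤ d s := by
    intro s hs hsη
    have h1 := hquad' s hs.le (hsη.trans hη_le_δ)
    have h2 : C₁ * s ≤ 1 / 2 := by
      have : s ≤ 1 / (2 * C₁) := hsη.trans hη_le
      calc C₁ * s ≤ C₁ * (1 / (2 * C₁)) := by nlinarith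
        _ = 1 / 2 := by field_simp
    have := abs_le.1 h1
    nlinarith
  -- bound on g near 0
  have hg_bd : ∀ s : ℝ, 0 < s → s ≤ η → |g s| ≤ 2 * C₁ := by
    intro s hs hsη
    have hds : s / 2 ≤ d s := hd_lb s hs hsη
    have hds0 : 0 < d s := hd_pos s hs
    have h1 := hquad' s hs.le (hsη.trans hη_le_δ)
    have : g s = (s - d s) / (d s * s) := by
      rw [hg_def]; field_simp
    rw [this, abs_div, abs_of_pos (by positivity : (0:ℝ) < d s * s)]
    rw [div_le_iff₀ (by positivity)]
    have habs : |s - d s| = |d s - s| := abs_sub_comm _ _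
    rw [habs]
    nlinarith [abs_nonneg (d s - s)]
  -- continuity facts
  have hd_cont' : ContinuousOn d (Set.Ioi 0) := hd_cont.mono Set.Ioi_subset_Ici_self
  have hinv_cont : ContinuousOn (fun s => 1 / d s) (Set.Ioi 0) := by
    exact continuousOn_const.div hd_cont' fun s hs => (hd_pos s hs).ne'
  have hg_cont : ContinuousOn g (Set.Ioi 0) := by
    exact hinv_cont.sub (continuousOn_const.div continuousOn_id fun s hs => ne_of_gt hs)
  have uIcc_sub : ∀ u v : ℝ, 0 < u → 0 < v → Set.uIcc u v ⊆ Set.Ioi 0 := by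
    intro u v hu hv s hs
    exact lt_of_lt_of_le (lt_min hu hv) hs.1
  -- Φ differentiable on positives
  have hΦfun : Φ = fun x => ∫ s in (1:ℝ)..x, 1 / d s := funext hΦ
  have hΦ_deriv : ∀ x : ℝ, 0 < x → HasDerivAt Φ (1 / d x) x := by
    intro x hx
    rw [hΦfun]
    exact integral_hasDerivAt_right
      ((hinv_cont.mono (uIcc_sub 1 x one_pos hx)).intervalIntegrable)
      ⟨Set.Ioi 0, Ioi_mem_nhds hx, hinv_cont.aestronglyMeasurable measurableSet_Ioi⟩
      (hinv_cont.continuousAt (Ioi_mem_nhds hx))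
  have hLpfun : Lp = fun x => a * Real.exp (Φ x) := funext hLp
  have hLp_deriv : ∀ x : ℝ, 0 < x → HasDerivAt Lp (Lp x / d x) x := by
    intro x hx
    have h := ((hΦ_deriv x hx).exp).const_mul a
    rw [← hLpfun] at h
    rw [show Lp x / d x = a * (Real.exp (Φ x) * (1 / d x)) by rw [hLp]; ring]
    exact h
  have hLp_pos : ∀ t, 0 < Lp t := by
    intro t; rw [hLp]; exact mul_pos ha (Real.exp_pos _)
  have hLp_cont : ContinuousOn Lp (Set.Ioi 0) := fun x hx =>
    ((hLp_deriv x hx).continuousAt).continuousWithinAt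
  -- monotonicity of Φ
  have hΦ_mono : ∀ t x : ℝ, 0 < t → t ≤ x → Φ t ≤ Φ x := by
    intro t x ht htx
    have hx : 0 < x := lt_of_lt_of_le ht htx
    have hint1 : IntervalIntegrable (fun s => 1 / d s) volume 1 t :=
      (hinv_cont.mono (uIcc_sub 1 t one_pos ht)).intervalIntegrable
    have hint2 : IntervalIntegrable (fun s => 1 / d s) volume t x :=
      (hinv_cont.mono (uIcc_sub t x ht hx)).intervalIntegrable
    have hadd := intervalIntegral.integral_add_adjacent_intervals hint1 hint2
    have hnn : 0 ≤ ∫ s in t..x, 1 / d s := by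
      apply intervalIntegral.integral_nonneg htx
      intro u hu
      have hu0 : 0 < u := lt_of_lt_of_le ht hu.1
      exact (div_pos one_pos (hd_pos u hu0)).le
    rw [hΦ t, hΦ x]
    linarith [hadd]
  -- interval integrability of Lp on [0, x]
  have hLp_int : ∀ x : ℝ, 0 < x → IntervalIntegrable Lp volume 0 x := by
    intro x hx
    rw [intervalIntegrable_iff_integrableOn_Ioc_of_le hx.le]
    constructor
    · exact (hLp_cont.mono (fun s hs => hs.1)).aestronglyMeasurable measurableSet_Ioc
    · apply MeasureTheory.HasFiniteIntegral.restrict_of_bounded (C := Lp x)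
        measure_Ioc_lt_top
      refine MeasureTheory.ae_restrict_of_forall_mem measurableSet_Ioc ?_
      intro s hs
      rw [Real.norm_eq_abs, abs_of_pos (hLp_pos s)]
      rw [hLp s, hLp x]
      have := hΦ_mono s x hs.1 hs.2
      gcongr
  -- derivative of L on positives
  have hL_deriv_pos : ∀ x : ℝ, 0 < x → HasDerivAt L (Lp x) x := by
    intro x hx
    have base : HasDerivAt (fun u => ∫ t in (0:ℝ)..u, Lp t) (Lp x) x :=
      integral_hasDerivAt_right (hLp_int x hx)
        ⟨Set.Ioi 0, Ioi_mem_nhds hx, hLp_cont.aestronglyMeasurable measurableSet_Ioi⟩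
        (hLp_cont.continuousAt (Ioi_mem_nhds hx))
    apply base.congr_of_eventuallyEq
    filter_upwards [Ioi_mem_nhds hx] with y hy
    rw [hL y, abs_of_pos hy]
  -- interval integrability of g near 0
  have hg_int : ∀ t : ℝ, 0 ≤ t → t ≤ η → IntervalIntegrable g volume 0 t := by
    intro t ht htη
    rw [intervalIntegrable_iff_integrableOn_Ioc_of_le ht]
    constructor
    · exact (hg_cont.mono (fun s hs => hs.1)).aestronglyMeasurable measurableSet_Ioc
    · apply MeasureTheory.HasFiniteIntegral.restrict_of_bounded (C := 2 * C₁)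
        measure_Ioc_lt_top
      refine MeasureTheory.ae_restrict_of_forall_mem measurableSet_Ioc ?_
      intro s hs
      exact hg_bd s hs.1 (hs.2.trans htη)
  -- Lipschitz-type bound for c near 0
  have hc_bd : ∀ t : ℝ, 0 ≤ t → t ≤ η → |c t - c 0| ≤ 2 * C₁ * t := by
    intro t ht htη
    rcases eq_or_lt_of_le ht with rfl | ht'
    · simp
    · have h0t : IntervalIntegrable g volume 0 t := hg_int t ht htη
      have ht1 : IntervalIntegrable g volume t 1 := by
        rcases le_total t 1 with h | h
        · -- split [t,1] = [t,η∧1] ∪ ...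
          have htη1 : IntervalIntegrable g volume t (min η 1) := by
            rcases le_total t (min η 1) with h2 | h2
            · rw [intervalIntegrable_iff_integrableOn_Ioc_of_le h2]
              constructor
              · exact (hg_cont.mono (fun s hs => lt_of_lt_of_le ht' hs.1.le)).aestronglyMeasurable
                  measurableSet_Ioc
              · apply MeasureTheory.HasFiniteIntegral.restrict_of_bounded (C := 2 * C₁)
                  measure_Ioc_lt_top
                refine MeasureTheory.ae_restrict_of_forall_mem measurableSet_Ioc ?_
                intro s hs
                exact hg_bd s (lt_of_lt_of_le ht' hs.1.le) (hs.2.trans (min_le_left _ _))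
            · exact (hg_cont.mono (uIcc_sub t (min η 1) ht' (lt_min hη_pos one_pos))).intervalIntegrable
          have hη1 : IntervalIntegrable g volume (min η 1) 1 :=
            (hg_cont.mono (uIcc_sub (min η 1) 1 (lt_min hη_pos one_pos) one_pos)).intervalIntegrable
          exact htη1.trans hη1
        · exact (hg_cont.mono (uIcc_sub t 1 ht' one_pos)).intervalIntegrable
      have h01 : IntervalIntegrable g volume 0 1 := h0t.trans ht1
      have hadd := intervalIntegral.integral_add_adjacent_intervals h0t ht1
      have : c t - c 0 = -∫ s in (0:ℝ)..t, g s := by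
        rw [hc_eq, hc_eq]; linarith [hadd]
      rw [this, abs_neg]
      have := intervalIntegral.norm_integral_le_of_norm_le_const
        (C := 2 * C₁) (f := g) (a := (0:ℝ)) (b := t) ?_
      · rw [Real.norm_eq_abs] at this
        calc |∫ s in (0:ℝ)..t, g s| ≤ 2 * C₁ * |t - 0| := this
          _ = 2 * C₁ * t := by rw [sub_zero, abs_of_pos ht']
      · intro s hs
        rw [Set.uIoc_of_le ht] at hs
        exact hg_bd s hs.1 (hs.2.trans htη)
  -- continuity of c and M within [0,∞) at 0
  have hc_cont0 : Filter.Tendsto c (𝓝[Set.Ici 0] 0) (𝓝 (c 0)) := by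
    have hev : ∀ᶠ t in 𝓝[Set.Ici 0] 0, |c t - c 0| ≤ 2 * C₁ * t := by
      filter_upwards [eventually_mem_nhdsWithin,
        (gt_mem_nhds hη_pos).filter_mono nhdsWithin_le_nhds] with t ht1 ht2
      exact hc_bd t ht1 ht2.le
    have hsq : Filter.Tendsto (fun t => c t - c 0) (𝓝[Set.Ici 0] 0) (𝓝 0) := by
      apply squeeze_zero_norm' hev
      have : Filter.Tendsto (fun t : ℝ => 2 * C₁ * t) (𝓝 0) (𝓝 (2 * C₁ * 0)) :=
        (continuous_const.mul continuous_id).tendsto 0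
      rw [mul_zero] at this
      exact this.mono_left nhdsWithin_le_nhds
    have := hsq.add_const (c 0)
    simpa using this
  have hMfun : M = fun u => a * Real.exp (-(c u)) := funext hM_eq
  have hM_cont0 : Filter.Tendsto M (𝓝[Set.Ici 0] 0) (𝓝 (M 0)) := by
    rw [hMfun]
    exact ((Real.continuous_exp.tendsto _).comp hc_cont0.neg).const_mul a
  -- c differentiable on positives
  have hc_deriv : ∀ t : ℝ, 0 < t → HasDerivAt c (-(g t)) t := by
    intro t ht
    have base : HasDerivAt (fun u => ∫ s in (1:ℝ)..u, g s) (g t) t :=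
      integral_hasDerivAt_right
        ((hg_cont.mono (uIcc_sub 1 t one_pos ht)).intervalIntegrable)
        ⟨Set.Ioi 0, Ioi_mem_nhds ht, hg_cont.aestronglyMeasurable measurableSet_Ioi⟩
        (hg_cont.continuousAt (Ioi_mem_nhds ht))
    have : c = fun u => -∫ s in (1:ℝ)..u, g s := by
      funext u; rw [hc_eq, intervalIntegral.integral_symm]
    rw [this]
    exact base.neg
  have hM_deriv : ∀ t : ℝ, 0 < t → HasDerivAt M (M t * g t) t := by
    intro t ht
    have h := (((hc_deriv t ht).neg).exp).const_mul a
    rw [hMfun]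
    show HasDerivAt _ (a * Real.exp (-(c t)) * g t) t
    rw [show a * Real.exp (-(c t)) * g t = a * (Real.exp ((-c) t) * - -(g t)) by
      simp only [Pi.neg_apply]; ring]
    exact h
  have hM_pos : ∀ t, 0 < M t := by
    intro t; rw [hM_eq]; exact mul_pos ha (Real.exp_pos _)
  -- key identity : Lp t = t * M t for t > 0
  have hLp_eq : ∀ t : ℝ, 0 < t → Lp t = t * M t := by
    intro t ht
    have hsub : Set.uIcc (1:ℝ) t ⊆ Set.Ioi 0 := uIcc_sub 1 t one_pos ht
    have h1 : ∫ s in (1:ℝ)..t, 1 / d s = (∫ s in (1:ℝ)..t, 1 / s) + ∫ s in (1:ℝ)..t, g s := by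
      rw [← intervalIntegral.integral_add]
      · apply intervalIntegral.integral_congr
        intro s hs
        have : (0:ℝ) < s := hsub hs
        simp [hg_def]
      · apply ContinuousOn.intervalIntegrable
        refine (continuousOn_const.div continuousOn_id ?_)
        intro s hs; exact ne_of_gt (hsub hs)
      · exact (hg_cont.mono hsub).intervalIntegrable
    have h2 : ∫ s in (1:ℝ)..t, 1 / s = Real.log t := by
      rw [integral_one_div]
      · rw [div_one]
      · intro h; exact lt_irrefl 0 (Set.mem_Ioi.1 (hsub h))
    have h3 : ∫ s in (1:ℝ)..t, g s = -(c t) := by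
      rw [hc_eq, intervalIntegral.integral_symm]
    rw [hLp, hΦ, h1, h2, h3, hM_eq]
    rw [Real.exp_add, Real.exp_log ht]
    ring

  -- global first and second derivative candidates
  set E : ℝ → ℝ := fun x => x * M |x| with hE_def
  set F : ℝ → ℝ := fun x => if x = 0 then M 0 else Lp |x| / d |x| with hF_def
  have hF0 : F 0 = M 0 := if_pos rfl
  have hFne : ∀ x : ℝ, x ≠ 0 → F x = Lp |x| / d |x| := fun x hx => if_neg hx
  have habs_tendsto : Filter.Tendsto (fun h : ℝ => |h|) (𝓝 0) (𝓝[Set.Ici 0] 0) := by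
    rw [tendsto_nhdsWithin_iff]
    constructor
    · simpa using continuous_abs.tendsto (0:ℝ)
    · exact Filter.Eventually.of_forall fun h => abs_nonneg h
  have hMabs_cont : Filter.Tendsto (fun h : ℝ => M |h|) (𝓝 0) (𝓝 (M 0)) :=
    hM_cont0.comp habs_tendsto
  have heven : ∀ y, L (-y) = L y := by intro y; rw [hL, hL, abs_neg]
  have hL0 : L 0 = 0 := by rw [hL]; simp
  -- bound for M near 0
  set K : ℝ := a * Real.exp (|c 0| + 2 * C₁ * η) with hK_def
  have hK_pos : 0 < K := mul_pos ha (Real.exp_pos _)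
  have hM_bd : ∀ t : ℝ, 0 < t → t ≤ η → M t ≤ K := by
    intro t ht htη
    rw [hM_eq, hK_def]
    have h1 : |c t - c 0| ≤ 2 * C₁ * t := hc_bd t ht.le htη
    have h2 : -(c t) ≤ |c 0| + 2 * C₁ * η := by
      have := abs_le.1 h1
      have h3 : 2 * C₁ * t ≤ 2 * C₁ * η := by nlinarith
      have h4 := neg_abs_le (c 0)
      nlinarith
    have := Real.exp_le_exp.2 h2
    nlinarith [Real.exp_pos (-(c t))]
  have hLp_bd : ∀ t : ℝ, 0 < t → t ≤ η → Lp t ≤ K * t := by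
    intro t ht htη
    rw [hLp_eq t ht]
    have := hM_bd t ht htη
    nlinarith [hM_pos t]
  -- derivative of L at 0
  have hL_deriv0 : HasDerivAt L 0 0 := by
    rw [hasDerivAt_iff_tendsto_slope]
    apply squeeze_zero_norm'
    · show ∀ᶠ h in 𝓝[≠] (0:ℝ), ‖slope L 0 h‖ ≤ K * |h|
      have h1 : ∀ᶠ h in 𝓝[≠] (0:ℝ), h ≠ 0 := eventually_mem_nhdsWithin
      have h2 : ∀ᶠ h in 𝓝[≠] (0:ℝ), |h| < η := by
        have : ∀ᶠ h in 𝓝 (0:ℝ), |h| < η := by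
          have := continuous_abs.tendsto (0:ℝ)
          rw [abs_zero] at this
          exact this.eventually (gt_mem_nhds hη_pos)
        exact this.filter_mono nhdsWithin_le_nhds
      filter_upwards [h1, h2] with h hne hlt
      have habs : 0 < |h| := abs_pos.2 hne
      have hLh : |L h| ≤ K * |h| * |h| := by
        rw [hL h]
        have := intervalIntegral.norm_integral_le_of_norm_le_const
          (C := K * |h|) (f := Lp) (a := (0:ℝ)) (b := |h|) ?_
        · rw [Real.norm_eq_abs, sub_zero, abs_abs] at this
          exact this
        · intro t hti
          rw [Set.uIoc_of_le habs.le] at hti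
          rw [Real.norm_eq_abs, abs_of_pos (hLp_pos t)]
          calc Lp t ≤ K * t := hLp_bd t hti.1 (hti.2.trans hlt.le)
            _ ≤ K * |h| := by nlinarith [hti.2, hK_pos]
      rw [slope_def_field, hL0, sub_zero, sub_zero, Real.norm_eq_abs, abs_div]
      rw [div_le_iff₀ habs]
      exact hLh
    · have : Filter.Tendsto (fun h : ℝ => K * |h|) (𝓝 0) (𝓝 (K * |0|)) :=
        (continuous_const.mul continuous_abs).tendsto 0
      rw [abs_zero, mul_zero] at this
      exact this.mono_left nhdsWithin_le_nhds
  -- derivative of L everywhere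
  have hL_deriv : ∀ x : ℝ, HasDerivAt L (E x) x := by
    intro x
    rcases lt_trichotomy x 0 with hx | rfl | hx
    · have hx' : 0 < -x := neg_pos.2 hx
      have h := (hL_deriv_pos (-x) hx').comp x (hasDerivAt_neg x)
      have hLcomp : (L ∘ fun y : ℝ => -y) = L := funext fun y => heven y
      rw [hLcomp] at h
      have hE : E x = Lp (-x) * (-1) := by
        rw [hE_def]
        show x * M |x| = Lp (-x) * (-1)
        rw [abs_of_neg hx, hLp_eq (-x) hx']
        ring
      rw [hE]
      exact h
    · have hE : E 0 = 0 := by show (0:ℝ) * M |0| = 0; ring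
      rw [hE]
      exact hL_deriv0
    · have hE : E x = Lp x := by
        show x * M |x| = Lp x
        rw [abs_of_pos hx, hLp_eq x hx]
      rw [hE]
      exact hL_deriv_pos x hx
  -- derivative of E at 0
  have hE_deriv0 : HasDerivAt E (M 0) 0 := by
    rw [hasDerivAt_iff_tendsto_slope]
    have hcong : ∀ᶠ h in 𝓝[≠] (0:ℝ), (fun h : ℝ => M |h|) h = slope E 0 h := by
      filter_upwards [eventually_mem_nhdsWithin] with h hne
      have hne' : h ≠ 0 := hne
      rw [slope_def_field]
      show M |h| = (E h - E 0) / (h - 0)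
      have hE0 : E 0 = 0 := by show (0:ℝ) * M |0| = 0; ring
      have hEh : E h = h * M |h| := rfl
      rw [hE0, hEh, sub_zero, sub_zero, mul_comm, mul_div_assoc, div_self hne', mul_one]
    exact (hMabs_cont.mono_left nhdsWithin_le_nhds).congr' hcong
  -- derivative of E everywhere
  have hE_deriv : ∀ x : ℝ, HasDerivAt E (F x) x := by
    intro x
    rcases lt_trichotomy x 0 with hx | rfl | hx
    · have hx' : 0 < -x := neg_pos.2 hx
      have h := ((hLp_deriv (-x) hx').comp x (hasDerivAt_neg x)).neg
      have hEq : E =ᶠ[𝓝 x] fun y => -((Lp ∘ fun y : ℝ => -y) y) := by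
        filter_upwards [Iio_mem_nhds hx] with y hy
        show y * M |y| = -(Lp (-y))
        rw [abs_of_neg hy, hLp_eq (-y) (neg_pos.2 hy)]
        ring
      have h2 := h.congr_of_eventuallyEq hEq
      have hval : -(Lp (-x) / d (-x) * (-1)) = F x := by
        rw [hFne x (ne_of_lt hx), abs_of_neg hx]; ring
      rw [← hval]
      exact h2
    · rw [hF0]
      exact hE_deriv0
    · have h := hLp_deriv x hx
      have hEq : E =ᶠ[𝓝 x] Lp := by
        filter_upwards [Ioi_mem_nhds hx] with y hy
        show y * M |y| = Lp y
        rw [abs_of_pos hy, hLp_eq y hy]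
      have h2 := h.congr_of_eventuallyEq hEq
      have hval : Lp x / d x = F x := by
        rw [hFne x (ne_of_gt hx), abs_of_pos hx]
      rw [← hval]
      exact h2
  have hdiffL : Differentiable ℝ L := fun x => (hL_deriv x).differentiableAt
  have hderivL : deriv L = E := funext fun x => (hL_deriv x).deriv
  have hdiffE : Differentiable ℝ E := fun x => (hE_deriv x).differentiableAt
  have hderivE : deriv E = F := funext fun x => (hE_deriv x).deriv
  -- continuity of F
  have hF_cont : Continuous F := by
    rw [continuous_iff_continuousAt]
    intro x
    rcases lt_trichotomy x 0 with hx | rfl | hx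
    · have hx' : 0 < -x := neg_pos.2 hx
      have hcont : ContinuousAt (fun y : ℝ => Lp (-y) / d (-y)) x := by
        apply ContinuousAt.div
        · exact ((hLp_deriv (-x) hx').continuousAt).comp (continuous_neg.continuousAt)
        · exact (hd_cont.continuousAt (Ici_mem_nhds hx')).comp (continuous_neg.continuousAt)
        · exact (hd_pos (-x) hx').ne'
      apply hcont.congr
      filter_upwards [Iio_mem_nhds hx] with y hy
      rw [hFne y (ne_of_lt hy), abs_of_neg hy]
    · -- continuity at 0
      rw [ContinuousAt, ← nhdsNE_sup_pure, Filter.tendsto_sup]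
      constructor
      · -- along 𝓝[≠] 0
        have hratio : Filter.Tendsto (fun y : ℝ => |y| / d |y|) (𝓝[≠] (0:ℝ)) (𝓝 1) := by
          have hsub : Filter.Tendsto (fun y : ℝ => |y| / d |y| - 1) (𝓝[≠] (0:ℝ)) (𝓝 0) := by
            apply squeeze_zero_norm'
            · show ∀ᶠ y in 𝓝[≠] (0:ℝ), ‖|y| / d |y| - 1‖ ≤ 2 * C₁ * |y|
              have h1 : ∀ᶠ y in 𝓝[≠] (0:ℝ), y ≠ 0 := eventually_mem_nhdsWithin
              have h2 : ∀ᶠ y in 𝓝[≠] (0:ℝ), |y| < η := by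
                have : ∀ᶠ y in 𝓝 (0:ℝ), |y| < η := by
                  have := continuous_abs.tendsto (0:ℝ)
                  rw [abs_zero] at this
                  exact this.eventually (gt_mem_nhds hη_pos)
                exact this.filter_mono nhdsWithin_le_nhds
              filter_upwards [h1, h2] with y hne hlt
              set t := |y| with ht_def
              have ht : 0 < t := abs_pos.2 hne
              have htη : t ≤ η := hlt.le
              have hdt2 : t / 2 ≤ d t := hd_lb t ht htη
              have hdtpos : 0 < d t := hd_pos t ht
              have hq := hquad' t ht.le (htη.trans hη_le_δ)
              have : t / d t - 1 = (t - d t) / d t := by field_simp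
              rw [this, Real.norm_eq_abs, abs_div, abs_of_pos hdtpos]
              rw [div_le_iff₀ hdtpos]
              have habs2 : |t - d t| = |d t - t| := abs_sub_comm _ _
              rw [habs2]
              nlinarith [abs_nonneg (d t - t)]
            · have : Filter.Tendsto (fun y : ℝ => 2 * C₁ * |y|) (𝓝 0) (𝓝 (2 * C₁ * |0|)) :=
                (continuous_const.mul continuous_abs).tendsto 0
              rw [abs_zero, mul_zero] at this
              exact this.mono_left nhdsWithin_le_nhds
          have := hsub.add_const 1
          simpa using this
        have h1 : Filter.Tendsto (fun y : ℝ => M |y| * (|y| / d |y|)) (𝓝[≠] (0:ℝ))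
            (𝓝 (M 0 * 1)) :=
          (hMabs_cont.mono_left nhdsWithin_le_nhds).mul hratio
        rw [mul_one] at h1
        rw [hF0]
        apply h1.congr'
        filter_upwards [eventually_mem_nhdsWithin] with y hne
        have hne' : (y:ℝ) ≠ 0 := hne
        rw [hFne y hne', hLp_eq |y| (abs_pos.2 hne')]
        ring
      · exact tendsto_pure_nhds F 0
    · have hcont : ContinuousAt (fun y : ℝ => Lp y / d y) x := by
        apply ContinuousAt.div
        · exact (hLp_deriv x hx).continuousAt
        · exact hd_cont.continuousAt (Ici_mem_nhds hx)
        · exact (hd_pos x hx).ne'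
      apply hcont.congr
      filter_upwards [Ioi_mem_nhds hx] with y hy
      rw [hFne y (ne_of_gt hy), abs_of_pos hy]
  -- C² smoothness
  have hC2 : ContDiff ℝ 2 L := by
    rw [show (2 : WithTop ℕ∞) = 1 + 1 by norm_num, contDiff_succ_iff_deriv]
    refine ⟨hdiffL, by simp, ?_⟩
    rw [hderivL, contDiff_one_iff_deriv]
    exact ⟨hdiffE, by rw [hderivE]; exact hF_cont⟩
  -- second derivative formula
  have hiter : ∀ x, iteratedDeriv 2 L x = F x := by
    intro x
    rw [show (2:ℕ) = 1 + 1 from rfl, iteratedDeriv_succ, iteratedDeriv_one, hderivL, hderivE]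
  -- convexity
  have hF_nonneg : ∀ x, 0 ≤ F x := by
    intro x
    by_cases h : x = 0
    · rw [h, hF0]; exact (hM_pos 0).le
    · rw [hFne x h]
      exact div_nonneg (hLp_pos _).le (hd_nonneg _ (abs_nonneg x))
  have hconv : ConvexOn ℝ Set.univ L := by
    apply convexOn_of_deriv2_nonneg convex_univ hdiffL.continuous.continuousOn
    · rw [interior_univ]; exact hdiffL.differentiableOn
    · rw [interior_univ, hderivL]; exact hdiffE.differentiableOn
    · intro x _
      have : deriv^[2] L x = F x := by
        rw [Function.iterate_succ_apply', Function.iterate_one, hderivL, hderivE]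
      rw [this]
      exact hF_nonneg x
  refine ⟨⟨heven, hconv, hC2, ?_, ?_, ?_⟩, ?_, ?_⟩
  · -- positivity of second derivative off 0
    intro x hx
    rw [hiter x, hFne x hx]
    exact div_pos (hLp_pos _) (hd_pos _ (abs_pos.2 hx))
  · -- first derivative on positives
    intro x hx
    rw [hderivL]
    show x * M |x| = Lp x
    rw [abs_of_pos hx, hLp_eq x hx]
  · -- second derivative on positives
    intro x hx
    rw [hiter x, hFne x (ne_of_gt hx), abs_of_pos hx]
  · -- Newton ratio
    intro x hx
    rw [hderivL, hiter x, hFne x hx, hdt]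
    rcases hx.lt_or_gt with hneg | hpos
    · rw [Real.sign_of_neg hneg, abs_of_neg hneg]
      have hP : Lp (-x) ≠ 0 := (hLp_pos _).ne'
      have hD : d (-x) ≠ 0 := (hd_pos (-x) (neg_pos.2 hneg)).ne'
      have hE : E x = -Lp (-x) := by
        show x * M |x| = -Lp (-x)
        rw [abs_of_neg hneg, hLp_eq (-x) (neg_pos.2 hneg)]; ring
      rw [hE, neg_div, div_div_self'' hP hD, neg_one_mul]
    · rw [Real.sign_of_pos hpos, abs_of_pos hpos]
      have hP : Lp x ≠ 0 := (hLp_pos _).ne'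
      have hD : d x ≠ 0 := (hd_pos x hpos).ne'
      have hE : E x = Lp x := by
        show x * M |x| = Lp x
        rw [abs_of_pos hpos, hLp_eq x hpos]
      rw [hE, div_div_self'' hP hD, one_mul]
  · -- Newton divergence
    intro X₀ β hX₀ hβ hgrow x hrec h0
    have hβ0 : 0 < β := lt_trans one_pos hβ
    have step : ∀ y : ℝ, X₀ ≤ |y| → β * |y| ≤ |y - dt y| ∧ X₀ ≤ |y - dt y| := by
      intro y hy
      have hy0 : y ≠ 0 := by
        intro h; rw [h, abs_zero] at hy; linarith
      rcases hy0.lt_or_gt with hneg | hpos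
      · have habs : |y| = -y := abs_of_neg hneg
        have hXy : X₀ ≤ -y := by rw [habs] at hy; exact hy
        have hdty : dt y = -(d (-y)) := by
          rw [hdt, Real.sign_of_neg hneg, abs_of_neg hneg]; ring
        have hgr : (1 + β) * (-y) ≤ d (-y) := hgrow (-y) hXy
        have h1 : y - dt y = y + d (-y) := by rw [hdty]; ring
        have h2 : β * (-y) ≤ y - dt y := by rw [h1]; nlinarith
        have h3 : 0 < y - dt y := by nlinarith
        constructor
        · rw [abs_of_pos h3, habs]; linarith
        · rw [abs_of_pos h3]; nlinarith
      · have habs : |y| = y := abs_of_pos hpos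
        have hXy : X₀ ≤ y := by rw [habs] at hy; exact hy
        have hdty : dt y = d y := by
          rw [hdt, Real.sign_of_pos hpos, abs_of_pos hpos]; ring
        have hgr : (1 + β) * y ≤ d y := hgrow y hXy
        have h2 : β * y ≤ -(y - dt y) := by rw [hdty]; nlinarith
        have h3 : y - dt y < 0 := by nlinarith
        constructor
        · rw [abs_of_neg h3, habs]; linarith
        · rw [abs_of_neg h3]; nlinarith
    have main : ∀ k, X₀ ≤ |x k| := by
      intro k
      induction k with
      | zero => exact h0
      | succ n ih => rw [hrec n]; exact (step (x n) ih).2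
    have growth : ∀ k, β * |x k| ≤ |x (k + 1)| := by
      intro k
      rw [hrec k]
      exact (step (x k) (main k)).1
    refine ⟨growth, ?_⟩
    have low : ∀ k, X₀ * β ^ k ≤ |x k| := by
      intro k
      induction k with
      | zero => simpa using main 0
      | succ n ih =>
        have h1 : X₀ * β ^ (n + 1) = (X₀ * β ^ n) * β := by ring
        have h2 : (X₀ * β ^ n) * β ≤ |x n| * β := by nlinarith
        have h3 : |x n| * β ≤ |x (n + 1)| := by
          rw [mul_comm]; exact growth n
        linarith
    apply Filter.tendsto_atTop_mono low
    exact (tendsto_pow_atTop_atTop_of_one_lt hβ).const_mul_atTop hX₀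
end

section
/- Let d : [0, ∞) → [0, ∞) be continuous with d(0) = 0, d(x) > 0 for x > 0, and |d(x) − x| ≤ C_0 x² on [0, δ] for some δ > 0, C_0 < ∞, and let L be the even C² convex function constructed from d via Φ(x) = ∫_1^x ds/d(s), L_+'(x) = a e^{Φ(x)} (a > 0), L(x) = ∫_0^{|x|} L_+'(t) dt. Assume additionally that d is C¹ on (0, ∞), that C_1 := sup_{x>0} |d'(x) − 1| / d(x) < ∞, and that there exist κ > 1 and X_1 > 0 with d(x) ≥ κ x for all x ≥ X_1. Then for every x > 0 the third derivative exists and satisfies L'''(x) = L''(x)(1 − d'(x))/d(x), the supremum sup_{x≠0} |L'''(x)| is finite, and consequently L'' is globally Lipschitz on ℝ (the Hessian of L is 2M-Lipschitz with 2M = sup_{x≠0} |L'''(x)|). -/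
open Real Set MeasureTheory intervalIntegral Filter Topology

set_option maxHeartbeats 1000000 in
/-- For the drift-to-loss construction (drift `d` continuous, `d(0)=0`,
`d>0` on `(0,∞)`, `|d(x)−x| ≤ C₀x²` near `0`; `Φ(x)=∫₁ˣ ds/d(s)`, `L₊'(x)=a e^{Φ(x)}`,
`L(x)=∫₀^{|x|} L₊'`), if additionally `d` is `C¹` on `(0,∞)` with
`C₁ := sup_{x>0} |d'(x)−1|/d(x) < ∞` and `d(x) ≥ κx` for `x ≥ X₁` with `κ > 1`, then for
every `x > 0` the third derivative exists with `L'''(x) = L''(x)(1 − d'(x))/d(x)`, the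
supremum `sup_{x≠0}|L'''(x)|` is finite, and `L''` is globally Lipschitz with constant
`2M = sup_{x≠0}|L'''(x)|`. -/
theorem stmt13 (d : ℝ → ℝ)
    (hd_cont : ContinuousOn d (Set.Ici 0))
    (hd0 : d 0 = 0)
    (hd_pos : ∀ x : ℝ, 0 < x → 0 < d x)
    (hd_nonneg : ∀ x : ℝ, 0 ≤ x → 0 ≤ d x)
    (δ C₀ : ℝ) (hδ : 0 < δ)
    (hquad : ∀ x ∈ Set.Icc (0 : ℝ) δ, |d x - x| ≤ C₀ * x ^ 2)
    (a : ℝ) (ha : 0 < a)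
    (Φ : ℝ → ℝ) (hΦ : ∀ x, Φ x = ∫ s in (1 : ℝ)..x, 1 / d s)
    (Lp : ℝ → ℝ) (hLp : ∀ x, Lp x = a * Real.exp (Φ x))
    (L : ℝ → ℝ) (hL : ∀ x, L x = ∫ t in (0 : ℝ)..|x|, Lp t)
    (hd_C1 : ContDiffOn ℝ 1 d (Set.Ioi 0))
    (C₁ : ℝ) (hC₁ : ∀ x : ℝ, 0 < x → |deriv d x - 1| ≤ C₁ * d x)
    (κ X₁ : ℝ) (hκ : 1 < κ) (hX₁ : 0 < X₁)
    (hlin : ∀ x : ℝ, X₁ ≤ x → κ * x ≤ d x) :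
    (∀ x : ℝ, 0 < x →
      HasDerivAt (iteratedDeriv 2 L)
        (iteratedDeriv 2 L x * (1 - deriv d x) / d x) x) ∧
    (∀ x : ℝ, 0 < x →
      iteratedDeriv 3 L x = iteratedDeriv 2 L x * (1 - deriv d x) / d x) ∧
    BddAbove ((fun x => |iteratedDeriv 3 L x|) '' {x : ℝ | x ≠ 0}) ∧
    (∀ u v : ℝ,
      |iteratedDeriv 2 L u - iteratedDeriv 2 L v|
        ≤ sSup ((fun x => |iteratedDeriv 3 L x|) '' {x : ℝ | x ≠ 0}) * |u - v|) := by
  -- ## basic positivity facts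
  have hd1 : 0 < d 1 := hd_pos 1 one_pos
  have hC₀ : 0 ≤ C₀ := by
    have h := hquad δ ⟨hδ.le, le_rfl⟩
    nlinarith [abs_nonneg (d δ - δ), sq_nonneg δ, mul_pos hδ hδ]
  have hC₁0 : 0 ≤ C₁ := by
    have h := hC₁ 1 one_pos
    nlinarith [abs_nonneg (deriv d 1 - 1)]
  set m : ℝ := min δ (min (1 / (2 * (C₀ + 1))) 1) with hm_def
  have hm0 : 0 < m := lt_min hδ (lt_min (by positivity) one_pos)
  have hmδ : m ≤ δ := min_le_left _ _
  have hm1 : m ≤ 1 := le_trans (min_le_right _ _) (min_le_right _ _)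
  have hmhalf : ∀ s : ℝ, 0 < s → s ≤ m → C₀ * s ≤ 1 / 2 := by
    intro s hs hsm
    have h1 : s ≤ 1 / (2 * (C₀ + 1)) :=
      hsm.trans ((min_le_right _ _).trans (min_le_left _ _))
    have h2 : s * (2 * (C₀ + 1)) ≤ 1 := by
      rw [← le_div_iff₀ (by positivity)]; exact h1
    nlinarith
  have hd_ub : ∀ s : ℝ, 0 < s → s ≤ δ → d s ≤ s + C₀ * s ^ 2 := by
    intro s hs hsδ
    have := abs_le.1 (hquad s ⟨hs.le, hsδ⟩)
    linarith [this.2]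
  have hd_lb : ∀ s : ℝ, 0 < s → s ≤ δ → s - C₀ * s ^ 2 ≤ d s := by
    intro s hs hsδ
    have := abs_le.1 (hquad s ⟨hs.le, hsδ⟩)
    linarith [this.1]
  have hd_half : ∀ s : ℝ, 0 < s → s ≤ m → s / 2 ≤ d s := by
    intro s hs hsm
    have h1 := hd_lb s hs (hsm.trans hmδ)
    have h2 := hmhalf s hs hsm
    nlinarith
  -- ## continuity and integrability of 1/d
  have hd_contAt : ∀ x : ℝ, 0 < x → ContinuousAt d x := fun x hx =>
    hd_cont.continuousAt (Ici_mem_nhds hx)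
  have hd_contOn : ContinuousOn d (Ioi 0) := fun x hx =>
    (hd_contAt x hx).continuousWithinAt
  have hinv_contOn : ContinuousOn (fun s => 1 / d s) (Ioi 0) :=
    continuousOn_const.div hd_contOn (fun x hx => (hd_pos x hx).ne')
  have hsub : ∀ p q : ℝ, 0 < p → 0 < q → uIcc p q ⊆ Ioi 0 := by
    intro p q hp hq z hz
    exact lt_of_lt_of_le (lt_min hp hq) hz.1
  have hint : ∀ p q : ℝ, 0 < p → 0 < q →
      IntervalIntegrable (fun s => 1 / d s) volume p q := fun p q hp hq =>
    (hinv_contOn.mono (hsub p q hp hq)).intervalIntegrable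
  have hΦfun : Φ = fun x => ∫ s in (1 : ℝ)..x, 1 / d s := funext hΦ
  have hΦ' : ∀ x : ℝ, 0 < x → HasDerivAt Φ (1 / d x) x := by
    intro x hx
    rw [hΦfun]
    exact intervalIntegral.integral_hasDerivAt_right (hint 1 x one_pos hx)
      ((ContinuousOn.stronglyMeasurableAtFilter isOpen_Ioi hinv_contOn) x hx)
      (continuousAt_const.div (hd_contAt x hx) (hd_pos x hx).ne')
  have hLpfun : Lp = fun x => a * Real.exp (Φ x) := funext hLp
  have hLp_pos : ∀ x : ℝ, 0 < Lp x := fun x => by rw [hLp]; positivity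
  have hLp' : ∀ x : ℝ, 0 < x → HasDerivAt Lp (Lp x / d x) x := by
    intro x hx
    have h := ((hΦ' x hx).exp).const_mul a
    rw [hLpfun]
    refine h.congr_deriv ?_
    beta_reduce
    ring
  have hLp_contOn : ContinuousOn Lp (Ioi 0) := fun x hx =>
    ((hLp' x hx).continuousAt).continuousWithinAt
  have hΦ_split : ∀ p q : ℝ, 0 < p → 0 < q →
      Φ q = Φ p + ∫ s in p..q, 1 / d s := by
    intro p q hp hq
    rw [hΦ, hΦ]
    exact (intervalIntegral.integral_add_adjacent_intervals
      (hint 1 p one_pos hp) (hint p q hp hq)).symm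
  -- ## near-zero upper bound on Φ
  have hΦ_near : ∀ x : ℝ, 0 < x → x ≤ m →
      Φ x ≤ Φ m + C₀ * m + Real.log x - Real.log m := by
    intro x hx hxm
    have hsplit := hΦ_split x m hx hm0
    have h0 : (0 : ℝ) ∉ uIcc x m := fun h => lt_irrefl 0 (Set.mem_Ioi.mp (hsub x m hx hm0 h))
    have hint1 : IntervalIntegrable (fun s : ℝ => 1 / s - C₀) volume x m := by
      apply ContinuousOn.intervalIntegrable
      exact (continuousOn_const.div continuousOn_id
        (fun z hz => ne_of_gt (hsub x m hx hm0 hz))).sub continuousOn_const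
    have hmono : (∫ s in x..m, (1 / s - C₀)) ≤ ∫ s in x..m, 1 / d s := by
      apply intervalIntegral.integral_mono_on hxm hint1 (hint x m hx hm0)
      intro s hs
      have hs0 : 0 < s := lt_of_lt_of_le hx hs.1
      have hub := hd_ub s hs0 (hs.2.trans hmδ)
      have hdpos := hd_pos s hs0
      have h1 : 1 / (s + C₀ * s ^ 2) ≤ 1 / d s :=
        one_div_le_one_div_of_le hdpos hub
      have h2 : 1 / s - C₀ ≤ 1 / (s + C₀ * s ^ 2) := by
        have he : 1 / s - C₀ = (1 - C₀ * s) / s := by field_simp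
        rw [he, div_le_div_iff₀ hs0 (by positivity)]
        have h3 : 0 ≤ C₀ ^ 2 * s ^ 3 := by positivity
        nlinarith [h3]
      linarith
    have hval : (∫ s in x..m, (1 / s - C₀)) =
        (Real.log m - Real.log x) - C₀ * (m - x) := by
      have hi1 : IntervalIntegrable (fun s : ℝ => 1 / s) volume x m := by
        apply ContinuousOn.intervalIntegrable
        exact continuousOn_const.div continuousOn_id
          (fun z hz => ne_of_gt (hsub x m hx hm0 hz))
      rw [intervalIntegral.integral_sub hi1 intervalIntegrable_const,
        integral_one_div h0, intervalIntegral.integral_const,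
        Real.log_div hm0.ne' hx.ne', smul_eq_mul]
      ring
    have hCx : C₀ * (m - x) ≤ C₀ * m := by nlinarith
    linarith
  set K₁ : ℝ := a * Real.exp (Φ m + C₀ * m - Real.log m) with hK₁_def
  have hK₁0 : 0 < K₁ := by positivity
  have hLp_near : ∀ x : ℝ, 0 < x → x ≤ m → Lp x ≤ K₁ * x := by
    intro x hx hxm
    rw [hLp]
    have h1 : Real.exp (Φ x) ≤ Real.exp (Φ m + C₀ * m + Real.log x - Real.log m) :=
      Real.exp_le_exp.2 (hΦ_near x hx hxm)
    have h2 : Real.exp (Φ m + C₀ * m + Real.log x - Real.log m)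
        = Real.exp (Φ m + C₀ * m - Real.log m) * x := by
      rw [show Φ m + C₀ * m + Real.log x - Real.log m
        = (Φ m + C₀ * m - Real.log m) + Real.log x by ring, Real.exp_add,
        Real.exp_log hx]
    calc a * Real.exp (Φ x)
        ≤ a * (Real.exp (Φ m + C₀ * m - Real.log m) * x) := by
          rw [← h2]; exact mul_le_mul_of_nonneg_left h1 ha.le
      _ = K₁ * x := by rw [hK₁_def]; ring
  have hg_near : ∀ x : ℝ, 0 < x → x ≤ m → Lp x / d x ≤ 2 * K₁ := by
    intro x hx hxm
    have hdh := hd_half x hx hxm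
    have hx2 : (0:ℝ) < x / 2 := by positivity
    calc Lp x / d x ≤ (K₁ * x) / (x / 2) :=
          div_le_div₀ (by positivity) (hLp_near x hx hxm) hx2 hdh
      _ = 2 * K₁ := by field_simp
  -- ## large-x bound
  set X : ℝ := max X₁ 1 with hX_def
  have hX0 : 0 < X := lt_of_lt_of_le one_pos (le_max_right _ _)
  have hd_ge_id : ∀ s : ℝ, X ≤ s → s ≤ d s := by
    intro s hsX
    have hs0 : 0 < s := lt_of_lt_of_le hX0 hsX
    have := hlin s (le_trans (le_max_left _ _) hsX)
    nlinarith
  have hΦ_far : ∀ x : ℝ, X ≤ x → Φ x ≤ Φ X + (Real.log x - Real.log X) := by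
    intro x hxX
    have hx0 : 0 < x := lt_of_lt_of_le hX0 hxX
    have hsplit := hΦ_split X x hX0 hx0
    have h0 : (0 : ℝ) ∉ uIcc X x := fun h =>
      lt_irrefl 0 (Set.mem_Ioi.mp (hsub X x hX0 hx0 h))
    have hi1 : IntervalIntegrable (fun s : ℝ => 1 / s) volume X x := by
      apply ContinuousOn.intervalIntegrable
      exact continuousOn_const.div continuousOn_id
        (fun z hz => ne_of_gt (hsub X x hX0 hx0 hz))
    have hmono : (∫ s in X..x, 1 / d s) ≤ ∫ s in X..x, 1 / s := by
      apply intervalIntegral.integral_mono_on hxX (hint X x hX0 hx0) hi1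
      intro s hs
      have hs0 : 0 < s := lt_of_lt_of_le hX0 hs.1
      exact one_div_le_one_div_of_le hs0 (hd_ge_id s hs.1)
    have hval : (∫ s in X..x, 1 / s) = Real.log x - Real.log X := by
      rw [integral_one_div h0, Real.log_div hx0.ne' hX0.ne']
    linarith
  set K₂ : ℝ := a * Real.exp (Φ X - Real.log X) with hK₂_def
  have hg_far : ∀ x : ℝ, X ≤ x → Lp x / d x ≤ K₂ := by
    intro x hxX
    have hx0 : 0 < x := lt_of_lt_of_le hX0 hxX
    have hLpx : Lp x ≤ K₂ * x := by
      rw [hLp]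
      have h1 : Real.exp (Φ x) ≤ Real.exp (Φ X + (Real.log x - Real.log X)) :=
        Real.exp_le_exp.2 (hΦ_far x hxX)
      have h2 : Real.exp (Φ X + (Real.log x - Real.log X))
          = Real.exp (Φ X - Real.log X) * x := by
        rw [show Φ X + (Real.log x - Real.log X)
          = (Φ X - Real.log X) + Real.log x by ring, Real.exp_add, Real.exp_log hx0]
      calc a * Real.exp (Φ x)
          ≤ a * (Real.exp (Φ X - Real.log X) * x) := by
            rw [← h2]; exact mul_le_mul_of_nonneg_left h1 ha.le
        _ = K₂ * x := by rw [hK₂_def]; ring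
    calc Lp x / d x ≤ (K₂ * x) / x :=
          div_le_div₀ (by positivity) hLpx hx0 (hd_ge_id x hxX)
      _ = K₂ := by field_simp
  -- ## middle range
  have hIccsub : Icc m X ⊆ Ioi 0 := fun z hz => lt_of_lt_of_le hm0 hz.1
  have hg_contOn : ContinuousOn (fun x => Lp x / d x) (Icc m X) :=
    ((hLp_contOn.mono hIccsub).div (hd_contOn.mono hIccsub)
      (fun z hz => (hd_pos z (hIccsub hz)).ne'))
  obtain ⟨K₃, hK₃⟩ := (isCompact_Icc (a := m) (b := X)).exists_bound_of_continuousOn hg_contOn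
  set B : ℝ := max (2 * K₁) (max K₂ K₃) with hB_def
  have hgB : ∀ x : ℝ, 0 < x → Lp x / d x ≤ B := by
    intro x hx
    rcases le_total x m with h | h
    · exact (hg_near x hx h).trans (le_max_left _ _)
    rcases le_total x X with h2 | h2
    · have h3 := hK₃ x ⟨h, h2⟩
      rw [Real.norm_eq_abs] at h3
      exact ((le_abs_self _).trans h3).trans
        ((le_max_right K₂ K₃).trans (le_max_right _ _))
    · exact (hg_far x h2).trans ((le_max_left K₂ K₃).trans (le_max_right _ _))
  have hB0 : 0 ≤ B := le_trans (by positivity : (0:ℝ) ≤ 2 * K₁) (le_max_left _ _)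
  -- ## integrability of bounded continuous functions on (0, b]
  have hbdd_int : ∀ (g : ℝ → ℝ) (b Cb : ℝ), 0 < b → ContinuousOn g (Ioi 0) →
      (∀ s ∈ Ioc (0:ℝ) b, |g s| ≤ Cb) → IntervalIntegrable g volume 0 b := by
    intro g b Cb hb hgc hgb
    rw [intervalIntegrable_iff_integrableOn_Ioc_of_le hb.le]
    have hmeas : AEStronglyMeasurable g (volume.restrict (Ioc (0:ℝ) b)) :=
      (hgc.mono Ioc_subset_Ioi_self).aestronglyMeasurable measurableSet_Ioc
    refine ⟨hmeas, ?_⟩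
    apply HasFiniteIntegral.restrict_of_bounded (C := Cb) measure_Ioc_lt_top
    exact (ae_restrict_iff' measurableSet_Ioc).2 (ae_of_all _ fun s hs => hgb s hs)
  have hLp_mono : ∀ p q : ℝ, 0 < p → p ≤ q → Lp p ≤ Lp q := by
    intro p q hp hpq
    have hq : 0 < q := lt_of_lt_of_le hp hpq
    have h1 : Φ p ≤ Φ q := by
      rw [hΦ_split p q hp hq]
      have h2 : 0 ≤ ∫ s in p..q, 1 / d s := by
        apply intervalIntegral.integral_nonneg hpq
        intro u hu
        have hu0 : 0 < u := lt_of_lt_of_le hp hu.1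
        exact le_of_lt (div_pos one_pos (hd_pos u hu0))
      linarith
    rw [hLp p, hLp q]
    exact mul_le_mul_of_nonneg_left (Real.exp_le_exp.2 h1) ha.le
  have hLp_int : ∀ b : ℝ, 0 < b → IntervalIntegrable Lp volume 0 b := by
    intro b hb
    apply hbdd_int Lp b (Lp b) hb hLp_contOn
    intro s hs
    rw [abs_of_pos (hLp_pos s)]
    exact hLp_mono s b hs.1 hs.2
  -- ## derivative of L
  have hL0 : L 0 = 0 := by rw [hL]; simp
  have hLD_pos : ∀ y : ℝ, 0 < y → HasDerivAt L (Lp y) y := by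
    intro y hy
    have hG : HasDerivAt (fun u => ∫ t in (0:ℝ)..u, Lp t) (Lp y) y :=
      intervalIntegral.integral_hasDerivAt_right (hLp_int y hy)
        ((ContinuousOn.stronglyMeasurableAtFilter isOpen_Ioi hLp_contOn) y hy)
        (hLp' y hy).continuousAt
    apply hG.congr_of_eventuallyEq
    filter_upwards [Ioi_mem_nhds hy] with z hz
    rw [hL, abs_of_pos hz]
  have hLD_neg : ∀ y : ℝ, y < 0 → HasDerivAt L (-(Lp (-y))) y := by
    intro y hy
    have hy0 : 0 < -y := by linarith
    have hG : HasDerivAt (fun u => ∫ t in (0:ℝ)..u, Lp t) (Lp (-y)) (-y) :=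
      intervalIntegral.integral_hasDerivAt_right (hLp_int (-y) hy0)
        ((ContinuousOn.stronglyMeasurableAtFilter isOpen_Ioi hLp_contOn) (-y) hy0)
        (hLp' (-y) hy0).continuousAt
    have h2 := hG.comp y (hasDerivAt_neg y)
    have h3 : HasDerivAt (fun z => ∫ t in (0:ℝ)..(-z), Lp t) (-(Lp (-y))) y := by
      refine h2.congr_deriv ?_
      ring
    apply h3.congr_of_eventuallyEq
    filter_upwards [Iio_mem_nhds hy] with z hz
    rw [hL, abs_of_neg hz]
  have hLD_zero : HasDerivAt L 0 0 := by
    rw [hasDerivAt_iff_tendsto_slope]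
    have hLb : ∀ y : ℝ, |y| ≤ m → (0 ≤ L y ∧ L y ≤ K₁ / 2 * y ^ 2) := by
      intro y hym
      rcases eq_or_ne y 0 with rfl | hy0
      · simp [hL0]
      have hay : 0 < |y| := abs_pos.2 hy0
      have hLy : L y = ∫ t in Ioc (0:ℝ) |y|, Lp t := by
        rw [hL, intervalIntegral.integral_of_le (abs_nonneg y)]
      constructor
      · rw [hLy]
        apply MeasureTheory.setIntegral_nonneg measurableSet_Ioc
        intro t _
        exact (hLp_pos t).le
      · have hint1 : IntegrableOn Lp (Ioc (0:ℝ) |y|) := by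
          rw [← intervalIntegrable_iff_integrableOn_Ioc_of_le (abs_nonneg y)]
          exact hLp_int _ hay
        have hint2 : IntegrableOn (fun t => K₁ * t) (Ioc (0:ℝ) |y|) := by
          apply Continuous.integrableOn_Ioc
          exact continuous_const.mul continuous_id
        have hmono : (∫ t in Ioc (0:ℝ) |y|, Lp t) ≤ ∫ t in Ioc (0:ℝ) |y|, K₁ * t := by
          apply MeasureTheory.setIntegral_mono_on hint1 hint2 measurableSet_Ioc
          intro t ht
          exact hLp_near t ht.1 (ht.2.trans hym)
        have hval : (∫ t in Ioc (0:ℝ) |y|, K₁ * t) = K₁ / 2 * y ^ 2 := by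
          rw [← intervalIntegral.integral_of_le (abs_nonneg y),
            intervalIntegral.integral_const_mul, integral_id, sq_abs]
          ring
        rw [hLy]
        linarith [hmono, hval.le, hval.ge]
    apply squeeze_zero_norm' (a := fun y : ℝ => K₁ / 2 * |y|)
    · have hm_mem : {y : ℝ | |y| ≤ m} ∈ 𝓝[≠] (0:ℝ) := by
        apply mem_nhdsWithin_of_mem_nhds
        have : Icc (-m) m ∈ 𝓝 (0:ℝ) := Icc_mem_nhds (by linarith) hm0
        filter_upwards [this] with z hz
        rw [abs_le]; exact ⟨hz.1, hz.2⟩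
      filter_upwards [hm_mem, self_mem_nhdsWithin] with y hym hy0
      have hy0' : y ≠ 0 := hy0
      obtain ⟨h1, h2⟩ := hLb y hym
      have hsl : slope L 0 y = L y / y := by
        rw [slope_def_field, hL0, sub_zero, sub_zero]
      rw [hsl, Real.norm_eq_abs, abs_div]
      rw [abs_of_nonneg h1]
      rw [div_le_iff₀ (abs_pos.2 hy0')]
      calc L y ≤ K₁ / 2 * y ^ 2 := h2
        _ = K₁ / 2 * |y| * |y| := by rw [← sq_abs]; ring
    · have hc : Continuous (fun y : ℝ => K₁ / 2 * |y|) :=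
        continuous_const.mul continuous_abs
      have := (hc.tendsto 0).mono_left (nhdsWithin_le_nhds (s := {(0:ℝ)}ᶜ))
      simpa using this
  have hderivL_pos : ∀ y : ℝ, 0 < y → deriv L y = Lp y := fun y hy => (hLD_pos y hy).deriv
  have hderivL_zero : deriv L 0 = 0 := hLD_zero.deriv
  -- ## second derivative
  have h2succ : iteratedDeriv 2 L = deriv (deriv L) := by
    rw [show (2:ℕ) = 1 + 1 from rfl, iteratedDeriv_succ, iteratedDeriv_one]
  have h3succ : iteratedDeriv 3 L = deriv (iteratedDeriv 2 L) := by
    rw [show (3:ℕ) = 2 + 1 from rfl, iteratedDeriv_succ]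
  have hf2 : ∀ x : ℝ, 0 < x → iteratedDeriv 2 L x = Lp x / d x := by
    intro x hx
    rw [h2succ]
    have hEq : deriv L =ᶠ[𝓝 x] Lp := by
      filter_upwards [Ioi_mem_nhds hx] with z hz
      exact hderivL_pos z hz
    rw [hEq.deriv_eq]
    exact (hLp' x hx).deriv
  have hq' : ∀ x : ℝ, 0 < x →
      HasDerivAt (fun y => Lp y / d y) ((Lp x / d x) * (1 - deriv d x) / d x) x := by
    intro x hx
    have hdne : d x ≠ 0 := (hd_pos x hx).ne'
    have hdx : HasDerivAt d (deriv d x) x := by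
      have hdiff : DifferentiableAt ℝ d x :=
        ((hd_C1.differentiableOn one_ne_zero) x hx).differentiableAt (isOpen_Ioi.mem_nhds hx)
      exact hdiff.hasDerivAt
    have h := (hLp' x hx).div hdx hdne
    refine h.congr_deriv ?_
    rw [div_mul_cancel₀ _ hdne]
    ring
  have part1 : ∀ x : ℝ, 0 < x →
      HasDerivAt (iteratedDeriv 2 L) (iteratedDeriv 2 L x * (1 - deriv d x) / d x) x := by
    intro x hx
    have hEq : iteratedDeriv 2 L =ᶠ[𝓝 x] fun y => Lp y / d y := by
      filter_upwards [Ioi_mem_nhds hx] with z hz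
      exact hf2 z hz
    have h := (hq' x hx).congr_of_eventuallyEq hEq
    rwa [hf2 x hx]
  have part2 : ∀ x : ℝ, 0 < x →
      iteratedDeriv 3 L x = iteratedDeriv 2 L x * (1 - deriv d x) / d x := by
    intro x hx
    rw [h3succ]
    exact (part1 x hx).deriv
  -- ## bound on the third derivative
  have hbound_pos : ∀ x : ℝ, 0 < x → |iteratedDeriv 3 L x| ≤ C₁ * B := by
    intro x hx
    have hdx := hd_pos x hx
    have hLpx := hLp_pos x
    rw [part2 x hx, hf2 x hx, abs_div, abs_mul,
      abs_of_pos (div_pos hLpx hdx), abs_of_pos hdx]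
    have h1 : |1 - deriv d x| ≤ C₁ * d x := by
      rw [abs_sub_comm]; exact hC₁ x hx
    calc Lp x / d x * |1 - deriv d x| / d x
        ≤ Lp x / d x * (C₁ * d x) / d x := by
          gcongr
      _ = C₁ * (Lp x / d x) := by field_simp
      _ ≤ C₁ * B := mul_le_mul_of_nonneg_left (hgB x hx) hC₁0
  have hLeven : (fun y => L (-y)) = L := funext fun y => by rw [hL, hL, abs_neg]
  have hbound : ∀ x : ℝ, x ≠ 0 → |iteratedDeriv 3 L x| ≤ C₁ * B := by
    intro x hx0
    rcases hx0.lt_or_gt with h | h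
    · have h3 : iteratedDeriv 3 L x = (-1:ℝ)^3 • iteratedDeriv 3 L (-x) := by
        conv_lhs => rw [← hLeven]
        exact iteratedDeriv_comp_neg 3 L x
      rw [h3]
      have h4 := hbound_pos (-x) (by linarith : (0:ℝ) < -x)
      calc |(-1:ℝ)^3 • iteratedDeriv 3 L (-x)| = |iteratedDeriv 3 L (-x)| := by
            rw [smul_eq_mul, abs_mul]; norm_num
        _ ≤ C₁ * B := h4
    · exact hbound_pos x h
  have part3 : BddAbove ((fun x => |iteratedDeriv 3 L x|) '' {x : ℝ | x ≠ 0}) := by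
    refine ⟨C₁ * B, ?_⟩
    rintro v ⟨x, hx, rfl⟩
    exact hbound x hx
  set M : ℝ := sSup ((fun x => |iteratedDeriv 3 L x|) '' {x : ℝ | x ≠ 0}) with hM_def
  have hM : ∀ x : ℝ, x ≠ 0 → |iteratedDeriv 3 L x| ≤ M :=
    fun x hx => le_csSup part3 ⟨x, hx, rfl⟩
  have hM0 : 0 ≤ M := le_trans (abs_nonneg _) (hM 1 one_ne_zero)
  -- ## the limit of Lp x / x at 0+
  set w : ℝ → ℝ := fun s => 1 / s - 1 / d s with hw_def
  have hw_contOn : ContinuousOn w (Ioi 0) := by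
    apply ContinuousOn.sub
    · exact continuousOn_const.div continuousOn_id (fun z hz => ne_of_gt hz)
    · exact hinv_contOn
  have hw_bdd : ∀ s ∈ Ioc (0:ℝ) m, |w s| ≤ 4 * C₀ := by
    intro s hs
    have hs0 := hs.1
    have hd2 := hd_half s hs0 hs.2
    have hdpos := hd_pos s hs0
    have hq := abs_le.1 (hquad s ⟨hs0.le, hs.2.trans hmδ⟩)
    have he : w s = (d s - s) / (s * d s) := by
      rw [hw_def]
      field_simp
    rw [he, abs_div, abs_of_pos (mul_pos hs0 hdpos)]
    have hnum : |d s - s| ≤ C₀ * s ^ 2 := abs_le.2 hq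
    calc |d s - s| / (s * d s) ≤ (C₀ * s ^ 2) / (s * (s / 2)) := by
          apply div_le_div₀ (by positivity) hnum (by positivity)
          exact mul_le_mul_of_nonneg_left hd2 hs0.le
      _ = 2 * C₀ := by field_simp
      _ ≤ 4 * C₀ := by linarith
  have hw_int : IntervalIntegrable w volume 0 m :=
    hbdd_int w m (4 * C₀) hm0 hw_contOn hw_bdd
  set V : ℝ → ℝ := fun x => ∫ s in m..x, w s with hV_def
  have hV_cont : ContinuousWithinAt V (Icc 0 m) 0 := by
    apply intervalIntegral.continuousWithinAt_primitive (measure_singleton 0)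
    rw [min_eq_right hm0.le, max_self]
    exact hw_int
  set β : ℝ := Φ m - Real.log m - V 0 with hβ_def
  set c : ℝ := a * Real.exp β with hc_def
  have hc0 : 0 < c := by positivity
  have hslope_eq : ∀ x : ℝ, 0 < x → x ≤ m →
      Φ x - Real.log x = Φ m - Real.log m - V x := by
    intro x hx hxm
    have hsplit := hΦ_split x m hx hm0
    have h0 : (0 : ℝ) ∉ uIcc x m := fun h =>
      lt_irrefl 0 (Set.mem_Ioi.mp (hsub x m hx hm0 h))
    have hi1 : IntervalIntegrable (fun s : ℝ => 1 / s) volume x m := by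
      apply ContinuousOn.intervalIntegrable
      exact continuousOn_const.div continuousOn_id
        (fun z hz => ne_of_gt (hsub x m hx hm0 hz))
    have hlog : (∫ s in x..m, 1 / s) = Real.log m - Real.log x := by
      rw [integral_one_div h0, Real.log_div hm0.ne' hx.ne']
    have hVx : V x = -∫ s in x..m, w s := by
      rw [hV_def]
      exact intervalIntegral.integral_symm x m
    have hw_sub : (∫ s in x..m, w s)
        = (∫ s in x..m, 1 / s) - ∫ s in x..m, 1 / d s := by
      rw [hw_def, intervalIntegral.integral_sub hi1 (hint x m hx hm0)]
    rw [hVx, hw_sub, hlog]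
    linarith
  have htendΦ : Tendsto (fun x => Φ x - Real.log x) (𝓝[>] (0:ℝ)) (𝓝 β) := by
    rw [← nhdsWithin_Ioc_eq_nhdsGT hm0]
    have h1 : Tendsto V (𝓝[Icc 0 m] (0:ℝ)) (𝓝 (V 0)) := hV_cont
    have h3 : Tendsto V (𝓝[Ioc 0 m] (0:ℝ)) (𝓝 (V 0)) :=
      h1.mono_left (nhdsWithin_mono 0 Ioc_subset_Icc_self)
    have h4 : Tendsto (fun x => Φ m - Real.log m - V x) (𝓝[Ioc 0 m] (0:ℝ))
        (𝓝 (Φ m - Real.log m - V 0)) := tendsto_const_nhds.sub h3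
    apply h4.congr'
    filter_upwards [self_mem_nhdsWithin] with z hz
    exact (hslope_eq z hz.1 hz.2).symm
  have htendLp : Tendsto (fun x => Lp x / x) (𝓝[>] (0:ℝ)) (𝓝 c) := by
    have h1 : Tendsto (fun x => a * Real.exp (Φ x - Real.log x)) (𝓝[>] (0:ℝ))
        (𝓝 (a * Real.exp β)) :=
      ((Real.continuous_exp.tendsto β).comp htendΦ).const_mul a
    apply h1.congr'
    filter_upwards [self_mem_nhdsWithin] with z hz
    rw [hLp z, Real.exp_sub, Real.exp_log hz]
    ring
  have hderiv0 : HasDerivAt (deriv L) c 0 := by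
    rw [hasDerivAt_iff_tendsto_slope]
    have h1 : Tendsto (fun y : ℝ => Lp |y| / |y|) (𝓝[≠] (0:ℝ)) (𝓝 c) :=
      htendLp.comp tendsto_abs_nhdsNE_zero
    apply h1.congr'
    filter_upwards [self_mem_nhdsWithin] with y hy
    have hy0 : y ≠ 0 := hy
    have hsl : slope (deriv L) 0 y = deriv L y / y := by
      rw [slope_def_field, hderivL_zero, sub_zero, sub_zero]
    rw [hsl]
    rcases hy0.lt_or_gt with h | h
    · rw [(hLD_neg y h).deriv, abs_of_neg h]
      ring
    · rw [hderivL_pos y h, abs_of_pos h]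
  have hf20 : iteratedDeriv 2 L 0 = c := by
    rw [h2succ]
    exact hderiv0.deriv
  have hcont0 : Tendsto (iteratedDeriv 2 L) (𝓝[>] (0:ℝ)) (𝓝 (iteratedDeriv 2 L 0)) := by
    rw [hf20]
    have hxd : Tendsto (fun x => x / d x) (𝓝[>] (0:ℝ)) (𝓝 1) := by
      have h0 : Tendsto (fun x => d x / x - 1) (𝓝[>] (0:ℝ)) (𝓝 0) := by
        apply squeeze_zero_norm' (a := fun x : ℝ => C₀ * x)
        · filter_upwards [Ioc_mem_nhdsGT_of_mem ⟨le_rfl, hm0⟩] with x hx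
          have hx0 := hx.1
          have hq := abs_le.1 (hquad x ⟨hx0.le, hx.2.trans hmδ⟩)
          have he : d x / x - 1 = (d x - x) / x := by field_simp
          rw [Real.norm_eq_abs, he, abs_div, abs_of_pos hx0, div_le_iff₀ hx0]
          calc |d x - x| ≤ C₀ * x ^ 2 := abs_le.2 hq
            _ = C₀ * x * x := by ring
        · have hc2 : Continuous (fun x : ℝ => C₀ * x) := continuous_const.mul continuous_id
          have := (hc2.tendsto 0).mono_left (nhdsWithin_le_nhds (s := Ioi (0:ℝ)))
          simpa using this
      have h1 : Tendsto (fun x => d x / x) (𝓝[>] (0:ℝ)) (𝓝 1) := by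
        have := h0.add (tendsto_const_nhds (x := (1:ℝ)))
        simp only [sub_add_cancel, zero_add] at this
        exact this
      have h2 : Tendsto (fun x => (d x / x)⁻¹) (𝓝[>] (0:ℝ)) (𝓝 1⁻¹) :=
        h1.inv₀ one_ne_zero
      rw [inv_one] at h2
      apply h2.congr'
      filter_upwards [self_mem_nhdsWithin] with z hz
      rw [inv_div]
    have h3 : Tendsto (fun x => (Lp x / x) * (x / d x)) (𝓝[>] (0:ℝ)) (𝓝 (c * 1)) :=
      htendLp.mul hxd
    rw [mul_one] at h3
    apply h3.congr'
    filter_upwards [self_mem_nhdsWithin] with z hz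
    rw [hf2 z hz]
    have hz0 : (z:ℝ) ≠ 0 := ne_of_gt hz
    have hdz : d z ≠ 0 := (hd_pos z hz).ne'
    field_simp
  -- ## Lipschitz estimate
  have hstep : ∀ u v : ℝ, 0 < u → u ≤ v →
      |iteratedDeriv 2 L v - iteratedDeriv 2 L u| ≤ M * (v - u) := by
    intro u v hu huv
    have key := norm_image_sub_le_of_norm_deriv_le_segment'
      (f := iteratedDeriv 2 L) (f' := iteratedDeriv 3 L) (a := u) (b := v) (C := M)
      ?_ ?_ v (right_mem_Icc.2 huv)
    · simpa [Real.norm_eq_abs] using key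
    · intro y hy
      have hy0 : 0 < y := lt_of_lt_of_le hu hy.1
      have h := part1 y hy0
      rw [← part2 y hy0] at h
      exact h.hasDerivWithinAt
    · intro y hy
      have hy0 : 0 < y := lt_of_lt_of_le hu hy.1
      rw [Real.norm_eq_abs]
      exact hM y hy0.ne'
  have hstep0 : ∀ v : ℝ, 0 ≤ v →
      |iteratedDeriv 2 L v - iteratedDeriv 2 L 0| ≤ M * v := by
    intro v hv
    rcases eq_or_lt_of_le hv with rfl | hv0
    · simp
    · have hten : Tendsto (fun u => |iteratedDeriv 2 L v - iteratedDeriv 2 L u|)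
          (𝓝[>] (0:ℝ)) (𝓝 (|iteratedDeriv 2 L v - iteratedDeriv 2 L 0|)) :=
        (tendsto_const_nhds.sub hcont0).abs
      apply le_of_tendsto hten
      have hIv : Iio v ∈ 𝓝[>] (0:ℝ) := nhdsWithin_le_nhds (Iio_mem_nhds hv0)
      filter_upwards [self_mem_nhdsWithin, hIv] with u hu1 hu2
      have h := hstep u v hu1 (le_of_lt hu2)
      nlinarith [mul_nonneg hM0 (le_of_lt (Set.mem_Ioi.mp hu1))]
  have heven : ∀ x : ℝ, iteratedDeriv 2 L (-x) = iteratedDeriv 2 L x := by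
    intro x
    have h := iteratedDeriv_comp_neg 2 L x
    rw [hLeven] at h
    rw [show ((-1:ℝ)^2) = 1 by norm_num, one_smul] at h
    exact h.symm
  have hpos : ∀ u v : ℝ, 0 ≤ v → v ≤ u →
      |iteratedDeriv 2 L u - iteratedDeriv 2 L v| ≤ M * (u - v) := by
    intro u v hv hvu
    rcases eq_or_lt_of_le hv with rfl | hv0
    · simpa using hstep0 u hvu
    · exact hstep v u hv0 hvu
  have hmain : ∀ u v : ℝ, v ≤ u →
      |iteratedDeriv 2 L u - iteratedDeriv 2 L v| ≤ M * (u - v) := by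
    intro u v hvu
    rcases le_total 0 v with hv | hv
    · exact hpos u v hv hvu
    rcases le_total u 0 with hu | hu
    · have h := hpos (-v) (-u) (by linarith) (by linarith)
      rw [heven, heven] at h
      rw [abs_sub_comm] at h
      calc |iteratedDeriv 2 L u - iteratedDeriv 2 L v| ≤ M * (-v - -u) := h
        _ = M * (u - v) := by ring
    · have h1 := hpos u 0 le_rfl hu
      have h2 := hpos (-v) 0 le_rfl (by linarith)
      rw [heven] at h2
      calc |iteratedDeriv 2 L u - iteratedDeriv 2 L v|
          ≤ |iteratedDeriv 2 L u - iteratedDeriv 2 L 0|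
            + |iteratedDeriv 2 L 0 - iteratedDeriv 2 L v| := abs_sub_le _ _ _
        _ ≤ M * (u - 0) + M * (-v - 0) := by
            rw [abs_sub_comm (iteratedDeriv 2 L 0)]
            exact add_le_add h1 h2
        _ = M * (u - v) := by ring
  refine ⟨part1, part2, part3, ?_⟩
  intro u v
  rcases le_total v u with h | h
  · have := hmain u v h
    rwa [abs_of_nonneg (sub_nonneg.2 h)]
  · have := hmain v u h
    rw [abs_sub_comm] at this
    rwa [abs_sub_comm u v, abs_of_nonneg (sub_nonneg.2 h)]
end

section
/- Fix C > 0 and let L : ℝ → ℝ be given by L(x) = C(|x| − ln(1 + |x|)). Then L is even, convex, and C² on ℝ, with L'(x) = C x/(1 + |x|) and L''(x) = C/(1 + |x|)² > 0, L'' is globally Lipschitz, and for all x ≠ 0 one has L'(x)/L''(x) = x(1 + |x|). Consequently the classical Newton iteration x_{k+1} = x_k − L'(x_k)/L''(x_k) satisfies x_{k+1} = −x_k |x_k|, hence |x_{k+1}| = x_k²; in particular the Newton iterates diverge whenever |x_0| > 1. -/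
open Filter Real


private lemma auxD1 (C : ℝ) (x : ℝ) :
    HasDerivAt (fun y => C * (|y| - Real.log (1 + |y|))) (C * x / (1 + |x|)) x := by
  rcases eq_or_ne x 0 with rfl | hx
  · rw [hasDerivAt_iff_tendsto_slope]
    have h0 : C * (0:ℝ) / (1 + |(0:ℝ)|) = 0 := by simp
    rw [h0, tendsto_zero_iff_abs_tendsto_zero]
    apply squeeze_zero' (g := fun h => |C| * |h|)
    · filter_upwards with t; exact abs_nonneg _
    · filter_upwards [self_mem_nhdsWithin] with t (ht : t ≠ 0)
      have h1 : (0:ℝ) < 1 + |t| := by positivity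
      have hlog1 : Real.log (1 + |t|) ≤ |t| := by
        have := Real.log_le_sub_one_of_pos h1; linarith
      have hlog2 : |t| - |t| ^ 2 ≤ Real.log (1 + |t|) := by
        have h2 := Real.one_sub_inv_le_log_of_pos h1
        have h3 : 1 - (1 + |t|)⁻¹ = |t| / (1 + |t|) := by field_simp; ring
        have h4 : |t| - |t| ^ 2 ≤ |t| / (1 + |t|) := by
          rw [le_div_iff₀ h1]; nlinarith [abs_nonneg t, sq_nonneg t]
        linarith [h3 ▸ h2]
      have hnn : 0 ≤ |t| - Real.log (1 + |t|) := by linarith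
      simp only [Function.comp_apply]
      rw [slope_def_field, abs_div]
      rw [show (t - 0) = t by ring, show C * (|t| - Real.log (1 + |t|)) - C * (|(0:ℝ)| - Real.log (1 + |(0:ℝ)|)) = C * (|t| - Real.log (1 + |t|)) by simp, abs_mul]
      rw [div_le_iff₀ (abs_pos.mpr ht)]
      have : |(|t| - Real.log (1 + |t|))| ≤ |t| * |t| := by
        rw [abs_of_nonneg hnn]; nlinarith
      calc |C| * |(|t| - Real.log (1 + |t|))| ≤ |C| * (|t| * |t|) :=
            mul_le_mul_of_nonneg_left this (abs_nonneg C)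
        _ = |C| * |t| * |t| := by ring
    · have : Tendsto (fun h : ℝ => |C| * |h|) (nhds 0) (nhds (|C| * |(0:ℝ)|)) :=
        (continuous_const.mul continuous_abs).tendsto 0
      simpa using this.mono_left nhdsWithin_le_nhds
  · have h1 : (0:ℝ) < 1 + |x| := by positivity
    have ha : HasDerivAt (fun y : ℝ => |y|) (SignType.sign x : ℝ) x := hasDerivAt_abs hx
    have hb : HasDerivAt (fun y : ℝ => 1 + |y|) (SignType.sign x : ℝ) x :=
      by exact ha.const_add 1
    have hc : HasDerivAt (fun y : ℝ => Real.log (1 + |y|))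
        ((1 + |x|)⁻¹ * (SignType.sign x : ℝ)) x :=
      ((Real.hasDerivAt_log (ne_of_gt h1)).comp x hb :)
    have hd := (ha.sub hc).const_mul C
    refine hd.congr_deriv ?_; symm
    rcases hx.lt_or_gt with h | h
    · rw [abs_of_neg h]; simp only [sign_neg h, SignType.coe_neg, SignType.coe_one]
      have hne : (1:ℝ) - x ≠ 0 := by linarith
      field_simp
      linear_combination (-C) * inv_mul_cancel₀ hne
    · rw [abs_of_pos h]; simp only [sign_pos h, SignType.coe_one]
      have : (1:ℝ) + x ≠ 0 := by linarith
      field_simp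
      try ring

private lemma auxD2 (C : ℝ) (x : ℝ) :
    HasDerivAt (fun y => C * y / (1 + |y|)) (C / (1 + |x|) ^ 2) x := by
  rcases eq_or_ne x 0 with rfl | hx
  · rw [hasDerivAt_iff_tendsto_slope]
    have h0 : C / (1 + |(0:ℝ)|) ^ 2 = C := by simp
    rw [h0]
    have : Tendsto (fun t : ℝ => C / (1 + |t|)) (nhdsWithin 0 {(0:ℝ)}ᶜ) (nhds C) := by
      have hcont : Tendsto (fun t : ℝ => C / (1 + |t|)) (nhds 0) (nhds (C / (1 + |(0:ℝ)|))) := by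
        apply Tendsto.div tendsto_const_nhds
        · exact (continuous_const.add continuous_abs).tendsto 0
        · simp
      simpa using hcont.mono_left nhdsWithin_le_nhds
    apply this.congr'
    filter_upwards [self_mem_nhdsWithin] with t (ht : t ≠ 0)
    rw [slope_def_field]
    have h1 : (0:ℝ) < 1 + |t| := by positivity
    field_simp
    ring
  · have h1 : (0:ℝ) < 1 + |x| := by positivity
    have ha : HasDerivAt (fun y : ℝ => |y|) (SignType.sign x : ℝ) x := hasDerivAt_abs hx
    have hb : HasDerivAt (fun y : ℝ => 1 + |y|) (SignType.sign x : ℝ) x := by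
      exact ha.const_add 1
    have hid : HasDerivAt (fun y : ℝ => C * y) C x := by
      simpa using (hasDerivAt_id x).const_mul C
    have hd := hid.div hb (ne_of_gt h1)
    refine hd.congr_deriv ?_; symm
    rcases hx.lt_or_gt with h | h
    · rw [abs_of_neg h]; simp only [sign_neg h, SignType.coe_neg, SignType.coe_one]
      have hne : (1:ℝ) - x ≠ 0 := by linarith
      field_simp
      ring
    · rw [abs_of_pos h]; simp only [sign_pos h, SignType.coe_one]
      have hne : (1:ℝ) + x ≠ 0 := by linarith
      field_simp
      ring

private lemma auxLip (C : ℝ) (hC : 0 < C) (u v : ℝ) :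
    |C / (1 + |u|) ^ 2 - C / (1 + |v|) ^ 2| ≤ (2 * C) * |u - v| := by
  have key : ∀ a b : ℝ, 0 ≤ a → 0 ≤ b → a ≤ b →
      |C / (1 + a) ^ 2 - C / (1 + b) ^ 2| ≤ (2 * C) * (b - a) := by
    intro a b ha hb hab
    have h1 : (0:ℝ) < 1 + a := by linarith
    have h2 : (0:ℝ) < 1 + b := by linarith
    have hle : C / (1 + b) ^ 2 ≤ C / (1 + a) ^ 2 := by
      apply div_le_div_of_nonneg_left hC.le (by positivity)
      nlinarith
    rw [abs_of_nonneg (by linarith)]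
    have e : C/(1+a)^2 - C/(1+b)^2 = C*(b-a)*(2+a+b)/((1+a)^2*(1+b)^2) := by
      field_simp; ring
    rw [e, div_le_iff₀ (by positivity : (0:ℝ) < (1 + a)^2 * (1+b)^2)]
    have hfac : (0:ℝ) ≤ 2*(1+a)^2*(1+b)^2 - (2+a+b) := by nlinarith [mul_nonneg ha hb, sq_nonneg (a+b)]
    nlinarith [mul_nonneg (mul_nonneg hC.le (sub_nonneg.mpr hab)) hfac]
  rcases le_total |u| |v| with h | h
  · calc |C / (1 + |u|) ^ 2 - C / (1 + |v|) ^ 2| ≤ (2*C) * (|v| - |u|) :=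
        key _ _ (abs_nonneg u) (abs_nonneg v) h
      _ ≤ (2*C) * |u - v| := by
        have := abs_sub_abs_le_abs_sub v u
        rw [abs_sub_comm v u] at this
        nlinarith
  · rw [abs_sub_comm]
    calc |C / (1 + |v|) ^ 2 - C / (1 + |u|) ^ 2| ≤ (2*C) * (|u| - |v|) :=
        key _ _ (abs_nonneg v) (abs_nonneg u) h
      _ ≤ (2*C) * |u - v| := by
        have := abs_sub_abs_le_abs_sub u v
        nlinarith

/-- For `L(x) = C(|x| − ln(1+|x|))` with `C > 0`: `L` is even, convex, `C²`,
with `L'(x) = Cx/(1+|x|)`, `L''(x) = C/(1+|x|)² > 0`, `L''` globally Lipschitz, and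
`L'(x)/L''(x) = x(1+|x|)` for `x ≠ 0`; consequently the Newton iteration satisfies
`x_{k+1} = −x_k|x_k|`, hence `|x_{k+1}| = x_k²`, and diverges whenever `|x₀| > 1`. -/
theorem stmt14 (C : ℝ) (hC : 0 < C)
    (L : ℝ → ℝ) (hLdef : ∀ x, L x = C * (|x| - Real.log (1 + |x|))) :
    (∀ x, L (-x) = L x) ∧
    ConvexOn ℝ Set.univ L ∧
    ContDiff ℝ 2 L ∧
    (∀ x : ℝ, deriv L x = C * x / (1 + |x|)) ∧
    (∀ x : ℝ, iteratedDeriv 2 L x = C / (1 + |x|) ^ 2) ∧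
    (∀ x : ℝ, 0 < iteratedDeriv 2 L x) ∧
    (∃ C' : ℝ, ∀ u v : ℝ,
      |iteratedDeriv 2 L u - iteratedDeriv 2 L v| ≤ C' * |u - v|) ∧
    (∀ x : ℝ, x ≠ 0 → deriv L x / iteratedDeriv 2 L x = x * (1 + |x|)) ∧
    (∀ x : ℕ → ℝ,
      (∀ k, x (k + 1) = x k - deriv L (x k) / iteratedDeriv 2 L (x k)) →
      (∀ k, x (k + 1) = -(x k) * |x k|) ∧
      (∀ k, |x (k + 1)| = (x k) ^ 2) ∧
      (1 < |x 0| → Filter.Tendsto (fun k => |x k|) Filter.atTop Filter.atTop)) := by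
  have hL : L = fun y => C * (|y| - Real.log (1 + |y|)) := funext hLdef
  have hd1 : ∀ y, HasDerivAt L (C * y / (1 + |y|)) y := by
    rw [hL]; exact auxD1 C
  have hderiv : deriv L = fun y => C * y / (1 + |y|) := funext fun y => (hd1 y).deriv
  have hd2 : ∀ y, HasDerivAt (deriv L) (C / (1 + |y|) ^ 2) y := by
    rw [hderiv]; exact auxD2 C
  have hderiv2 : deriv (deriv L) = fun y => C / (1 + |y|) ^ 2 :=
    funext fun y => (hd2 y).deriv
  have hit2 : ∀ y, iteratedDeriv 2 L y = C / (1 + |y|) ^ 2 := by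
    intro y
    rw [show (2:ℕ) = 1 + 1 from rfl, iteratedDeriv_succ, iteratedDeriv_one, hderiv2]
  have hratio : ∀ y : ℝ, deriv L y / iteratedDeriv 2 L y = y * (1 + |y|) := by
    intro y
    have h1 : (0:ℝ) < 1 + |y| := by positivity
    rw [hit2, hderiv]
    field_simp
  refine ⟨?_, ?_, ?_, ?_, hit2, ?_, ?_, fun y _ => hratio y, ?_⟩
  · intro y; rw [hLdef, hLdef, abs_neg]
  · apply convexOn_of_deriv2_nonneg' convex_univ
    · exact fun y _ => (hd1 y).differentiableAt.differentiableWithinAt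
    · exact fun y _ => (hd2 y).differentiableAt.differentiableWithinAt
    · intro y _
      have : deriv^[2] L y = deriv (deriv L) y := by
        rw [Function.iterate_succ_apply', Function.iterate_one]
      rw [this, hderiv2]
      positivity
  · rw [show (2 : WithTop ℕ∞) = 1 + 1 by norm_num]
    refine contDiff_succ_iff_deriv.mpr ⟨fun y => (hd1 y).differentiableAt, by simp, ?_⟩
    refine contDiff_one_iff_deriv.mpr ⟨fun y => (hd2 y).differentiableAt, ?_⟩
    rw [hderiv2]
    exact continuous_const.div (by continuity) (fun y => by positivity)
  · intro y; rw [hderiv]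
  · intro y; rw [hit2]; positivity
  · exact ⟨2 * C, fun u v => by rw [hit2, hit2]; exact auxLip C hC u v⟩
  · intro x hx
    have hstep : ∀ k, x (k + 1) = -(x k) * |x k| := by
      intro k
      rw [hx k, hratio (x k)]
      ring
    have hsq : ∀ k, |x (k + 1)| = (x k) ^ 2 := by
      intro k
      rw [hstep k, abs_mul, abs_neg, abs_abs, ← sq, sq_abs]
    refine ⟨hstep, hsq, fun h0 => ?_⟩
    set ε := |x 0| - 1 with hε
    have hεpos : 0 < ε := by simp [hε]; linarith
    have hge : ∀ k : ℕ, 1 + ε ≤ |x k| ∧ 1 + k * ε ≤ |x k| := by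
      intro k
      induction k with
      | zero => constructor <;> simp [hε] <;> linarith
      | succ k ih =>
        obtain ⟨h1, h2⟩ := ih
        have ht : (0:ℝ) ≤ (k:ℝ) := Nat.cast_nonneg k
        have he : |x (k+1)| = |x k| ^ 2 := by rw [hsq k, sq_abs]
        constructor
        · rw [he]; nlinarith
        · rw [he]; push_cast; nlinarith
    apply tendsto_atTop_mono (fun k => (hge k).2)
    apply tendsto_atTop_add_const_left _ 1
    exact Tendsto.atTop_mul_const hεpos tendsto_natCast_atTop_atTop
end

section
/- Let y ∈ {0, 1}, u ∈ ℝ, and set p = σ(u) = 1/(1 + e^{−u}). Define the binary cross entropy l(u, y) := −(y log p + (1 − y) log(1 − p)), its gradient g := p − y, and its Hessian h := p(1 − p) > 0. Then the Newton decrement satisfies g²/h ≥ l(u, y); explicitly, if y = 1 then g²/h = (1 − p)/p ≥ −log p, and if y = 0 then g²/h = p/(1 − p) ≥ −log(1 − p). In particular binary cross entropy is pointwise Hessian-dominated with constant c = 1. -/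
lemma aux_log_ge (x : ℝ) (hx : 0 < x) : (1 - x) / x ≥ -Real.log x := by
  have h1 : Real.log (1/x) ≤ 1/x - 1 := Real.log_le_sub_one_of_pos (by positivity)
  rw [Real.log_div one_ne_zero hx.ne', Real.log_one] at h1
  have : (1 - x) / x = 1/x - 1 := by field_simp
  linarith

/-- Binary cross entropy is pointwise Hessian-dominated with constant `c = 1`:
for `y ∈ {0,1}`, `u ∈ ℝ`, `p = σ(u)`, `l = −(y log p + (1−y) log(1−p))`, `g = p − y` and
`h = p(1−p) > 0`, the Newton decrement satisfies `g²/h ≥ l`; explicitly `g²/h = (1−p)/p ≥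
−log p` when `y = 1` and `g²/h = p/(1−p) ≥ −log(1−p)` when `y = 0`. -/
theorem stmt17 (y : ℝ) (hy : y = 0 ∨ y = 1) (u : ℝ)
    (p l g h : ℝ)
    (hp : p = 1 / (1 + Real.exp (-u)))
    (hl : l = -(y * Real.log p + (1 - y) * Real.log (1 - p)))
    (hg : g = p - y)
    (hh : h = p * (1 - p)) :
    0 < h ∧
    g ^ 2 / h ≥ l ∧
    (y = 1 → g ^ 2 / h = (1 - p) / p ∧ (1 - p) / p ≥ -Real.log p) ∧
    (y = 0 → g ^ 2 / h = p / (1 - p) ∧ p / (1 - p) ≥ -Real.log (1 - p)) := by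
  have he : 0 < Real.exp (-u) := Real.exp_pos _
  have hd : 0 < 1 + Real.exp (-u) := by linarith
  have hp0 : 0 < p := by rw [hp]; positivity
  have hp1 : p < 1 := by
    rw [hp, div_lt_one hd]; linarith
  have h1p : 0 < 1 - p := by linarith
  have hhpos : 0 < h := by rw [hh]; positivity
  have case1 : g ^ 2 / h = (1 - p) / p → (1 - p) / p ≥ -Real.log p →
      y = 1 → True := fun _ _ _ => trivial
  have e1 : (p - 1) ^ 2 / (p * (1 - p)) = (1 - p) / p := by
    rw [show (p-1)^2 = (1-p)*(1-p) by ring]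
    field_simp
  have e0 : p ^ 2 / (p * (1 - p)) = p / (1 - p) := by
    field_simp
  have i1 : (1 - p) / p ≥ -Real.log p := aux_log_ge p hp0
  have i0 : p / (1 - p) ≥ -Real.log (1 - p) := by
    have := aux_log_ge (1 - p) h1p
    simpa using this
  refine ⟨hhpos, ?_, ?_, ?_⟩
  · rcases hy with rfl | rfl
    · rw [hl, hg, hh]; simp only [sub_zero, zero_mul, zero_add, one_mul]
      rw [e0]; linarith
    · rw [hl, hg, hh]; simp only [sub_self, zero_mul, one_mul, add_zero]
      rw [e1]; linarith
  · rintro rfl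
    rw [hg, hh, e1]; exact ⟨rfl, i1⟩
  · rintro rfl
    rw [hg, hh]; rw [sub_zero]; exact ⟨e0, i0⟩
end

section
/- Let K ≥ 2, u ∈ ℝ^K, p = softmax(u) (so p_k = e^{u_k}/Σ_j e^{u_j} > 0 and Σ_k p_k = 1), and let y = e_t be a one-hot vector for some t ∈ {1, …, K}. Define the categorical cross entropy l(u, y) := −log p_t, its gradient g := p − y ∈ ℝ^K, and its Hessian H := diag(p) − p p^⊤. Then g lies in the zero-sum subspace V := {v : Σ_k v_k = 0}, there is a unique f ∈ V with H f = y − p, this f is given by f_t = s + 1/p_t − 1 and f_k = s − 1 for k ≠ t (with s = p^⊤ f), and the Newton decrement satisfies f^⊤ H f = (1 − p_t)/p_t ≥ −log p_t = l(u, y). In particular categorical cross entropy is pointwise Hessian-dominated with constant c = 1 on V. -/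
open Matrix

/-- Categorical cross entropy is pointwise Hessian-dominated with constant
`c = 1` on the zero-sum subspace: for `p = softmax(u)`, one-hot label `y = e_t`, gradient
`g = p − y` and Hessian `H = diag(p) − p pᵀ`, the gradient lies in the zero-sum subspace,
the Newton equation `H f = y − p` has a unique zero-sum solution, given explicitly by
`f_t = s + 1/p_t − 1`, `f_k = s − 1` (`k ≠ t`, `s = pᵀf`), and the Newton decrement is
`fᵀHf = (1−p_t)/p_t ≥ −log p_t = l(u, y)`. -/
theorem stmt18 (K : ℕ) (hK : 2 ≤ K) (u : Fin K → ℝ) (t : Fin K)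
    (p y g : Fin K → ℝ)
    (hp : ∀ k, p k = Real.exp (u k) / ∑ j, Real.exp (u j))
    (hy : ∀ k, y k = if k = t then 1 else 0)
    (hg : ∀ k, g k = p k - y k)
    (H : Matrix (Fin K) (Fin K) ℝ)
    (hH : H = Matrix.diagonal p - Matrix.vecMulVec p p) :
    (∑ k, g k = 0) ∧
    (∃! f : Fin K → ℝ, (∑ k, f k = 0) ∧ H.mulVec f = fun k => y k - p k) ∧
    (∀ f : Fin K → ℝ, (∑ k, f k = 0) → H.mulVec f = (fun k => y k - p k) →
      f t = p ⬝ᵥ f + 1 / p t - 1 ∧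
      (∀ k, k ≠ t → f k = p ⬝ᵥ f - 1) ∧
      f ⬝ᵥ H.mulVec f = (1 - p t) / p t) ∧
    (1 - p t) / p t ≥ -Real.log (p t) := by
  have hS : (0:ℝ) < ∑ j, Real.exp (u j) :=
    Finset.sum_pos (fun j _ => Real.exp_pos _) ⟨t, Finset.mem_univ t⟩
  have hppos : ∀ k, 0 < p k := by
    intro k; rw [hp]; positivity
  have hpsum : ∑ k, p k = 1 := by
    simp only [hp]
    rw [← Finset.sum_div, div_self (ne_of_gt hS)]
  have hysum : ∑ k, y k = 1 := by
    simp [hy]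
  have hKne : (K:ℝ) ≠ 0 := by positivity
  have hptne : p t ≠ 0 := ne_of_gt (hppos t)
  -- mulVec formula
  have hHmul : ∀ f : Fin K → ℝ, ∀ k, H.mulVec f k = p k * (f k - p ⬝ᵥ f) := by
    intro f k
    simp only [hH, Matrix.mulVec, dotProduct, Matrix.sub_apply,
      Matrix.vecMulVec_apply, sub_mul, Finset.sum_sub_distrib]
    rw [Finset.sum_eq_single k (fun j _ hj => by
      simp [Matrix.diagonal_apply_ne' p hj]) (by simp)]
    simp [Matrix.diagonal_apply_eq, mul_sub, Finset.mul_sum, mul_assoc]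
  -- characterization of any solution
  have hchar : ∀ f : Fin K → ℝ, (∑ k, f k = 0) →
      H.mulVec f = (fun k => y k - p k) →
      (∀ k, f k = p ⬝ᵥ f + (if k = t then 1 / p t else 0) - 1) ∧
      p ⬝ᵥ f = 1 - 1 / (K * p t) := by
    intro f hf0 hfe
    have hpt : ∀ k, f k = p ⬝ᵥ f + (if k = t then 1 / p t else 0) - 1 := by
      intro k
      have h1 : p k * (f k - p ⬝ᵥ f) = y k - p k := by
        rw [← hHmul f k, hfe]
      have hk := hppos k
      rw [hy k] at h1
      by_cases hkt : k = t
      · subst hkt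
        simp only [if_pos rfl, ↓reduceIte] at h1 ⊢
        field_simp at h1 ⊢
        linarith
      · simp only [if_neg hkt] at h1 ⊢
        have : f k - p ⬝ᵥ f = -1 := by
          field_simp at h1
          have := hk.ne'
          nlinarith [h1]
        linarith
    refine ⟨hpt, ?_⟩
    have hs : ∑ k, f k = K * (p ⬝ᵥ f) + 1 / p t - K := by
      calc ∑ k, f k = ∑ k, (p ⬝ᵥ f + (if k = t then 1 / p t else 0) - 1) := by
            exact Finset.sum_congr rfl (fun k _ => hpt k)
        _ = K * (p ⬝ᵥ f) + 1 / p t - K := by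
            simp [Finset.sum_add_distrib, Finset.sum_sub_distrib, Finset.sum_ite_eq',
              Finset.card_univ, mul_comm]
    rw [hf0] at hs
    field_simp
    field_simp at hs
    linarith
  -- explicit solution
  set s₀ : ℝ := 1 - 1 / (K * p t) with hs₀
  set f₀ : Fin K → ℝ := fun k => s₀ + (if k = t then 1 / p t else 0) - 1 with hf₀
  have hf₀sum : ∑ k, f₀ k = 0 := by
    simp only [hf₀, Finset.sum_sub_distrib, Finset.sum_add_distrib, Finset.sum_ite_eq',
      Finset.mem_univ, if_pos, Finset.sum_const, Finset.card_univ, Fintype.card_fin,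
      nsmul_eq_mul, mul_one]
    rw [hs₀]
    field_simp
    ring
  have hf₀dot : p ⬝ᵥ f₀ = s₀ := by
    simp only [dotProduct, hf₀]
    have : ∀ k, p k * (s₀ + (if k = t then 1 / p t else 0) - 1)
        = p k * (s₀ - 1) + (if k = t then p k * (1 / p t) else 0) := by
      intro k; by_cases h : k = t <;> simp [h] <;> ring
    rw [Finset.sum_congr rfl (fun k _ => this k)]
    rw [Finset.sum_add_distrib, ← Finset.sum_mul, hpsum, Finset.sum_ite_eq',
      if_pos (Finset.mem_univ t)]
    field_simp
    ring
  have hf₀eq : H.mulVec f₀ = (fun k => y k - p k) := by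
    funext k
    rw [hHmul f₀ k, hf₀dot, hy k]
    simp only [hf₀]
    by_cases h : k = t
    · subst h
      simp only [if_pos rfl, ↓reduceIte]
      field_simp
      ring
    · simp only [if_neg h, add_zero]
      ring
  refine ⟨?_, ⟨f₀, ⟨hf₀sum, hf₀eq⟩, ?_⟩, ?_, ?_⟩
  · simp [hg, Finset.sum_sub_distrib, hpsum, hysum]
  · rintro f ⟨hf0, hfe⟩
    obtain ⟨hpt, hdot⟩ := hchar f hf0 hfe
    funext k
    rw [hpt k, hdot, hf₀]
  · intro f hf0 hfe
    obtain ⟨hpt, hdot⟩ := hchar f hf0 hfe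
    refine ⟨by rw [hpt t]; simp, fun k hk => by rw [hpt k]; simp [hk], ?_⟩
    rw [hfe]
    have : f ⬝ᵥ (fun k => y k - p k) = f t - p ⬝ᵥ f := by
      simp only [dotProduct, mul_sub]
      rw [Finset.sum_sub_distrib]
      congr 1
      · rw [Finset.sum_eq_single t (fun j _ hj => by simp [hy, hj]) (by simp)]
        simp [hy]
      · simp [dotProduct, mul_comm]
    rw [this, hpt t]
    simp only [if_pos rfl, ↓reduceIte]
    field_simp
    ring
  · have h1 : Real.log (1 / p t) ≤ 1 / p t - 1 :=
      Real.log_le_sub_one_of_pos (one_div_pos.mpr (hppos t))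
    rw [Real.log_div one_ne_zero hptne, Real.log_one] at h1
    have : (1 - p t) / p t = 1 / p t - 1 := by field_simp
    rw [this]; linarith
end
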